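/- arXiv:1211.1209 — 6 statements merged into one kernel-verified Lean document; each statement's English description precedes it below -/
import Mathlib

section
/- A diagonal density matrix σ = Σ_j s_j |j⟩⟨j| (in the eigenbasis of H with eigenvalues ε_1 < ε_2 < ... < ε_d) satisfies tr(σH) ≤ tr(UσU†H) for all unitaries U if and only if its eigenvalues are non-increasing in energy, i.e., s_{j+1} ≤ s_j for all j. -/
open Matrix BigOperators
open scoped Classical ComplexOrder

noncomputable section

def energy {ι : Type*} [Fintype ι] (H ρ : Matrix ι ι ℂ) : ℝ :=
  (Matrix.trace (ρ * H)).re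

def IsDensity {ι : Type*} [Fintype ι] [DecidableEq ι] (ρ : Matrix ι ι ℂ) : Prop :=
  ρ.PosSemidef ∧ ρ.trace = 1

def IsPassive {ι : Type*} [Fintype ι] [DecidableEq ι] (H σ : Matrix ι ι ℂ) : Prop :=
  ∀ U ∈ Matrix.unitaryGroup ι ℂ, energy H σ ≤ energy H (U * σ * star U)

def vnEntropy {ι : Type*} [Fintype ι] [DecidableEq ι] (ρ : Matrix ι ι ℂ) : ℝ :=
  if h : ρ.IsHermitian then ∑ i, Real.negMulLog (h.eigenvalues i) else 0

def gibbs {ι : Type*} [Fintype ι] [DecidableEq ι] (H : Matrix ι ι ℂ) (β : ℝ) :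
    Matrix ι ι ℂ :=
  (Matrix.trace (NormedSpace.exp ((-β : ℂ) • H)))⁻¹ • NormedSpace.exp ((-β : ℂ) • H)

def tensPow {d : ℕ} (n : ℕ) (ρ : Matrix (Fin d) (Fin d) ℂ) :
    Matrix (Fin n → Fin d) (Fin n → Fin d) ℂ :=
  Matrix.of fun i j => ∏ m, ρ (i m) (j m)

def sumHam {d : ℕ} (n : ℕ) (H : Matrix (Fin d) (Fin d) ℂ) :
    Matrix (Fin n → Fin d) (Fin n → Fin d) ℂ :=
  Matrix.of fun i j => ∑ m, H (i m) (j m) * ∏ l ∈ Finset.univ.erase m, (if i l = j l then (1:ℂ) else 0)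

section Aux

variable {d : ℕ}

lemma aux_star_perm (π : Equiv.Perm (Fin d)) :
    star (π.permMatrix ℂ) = (π⁻¹).permMatrix ℂ := by
  ext i j
  rw [Matrix.star_apply]
  simp only [Equiv.Perm.permMatrix, PEquiv.toMatrix_apply, Equiv.toPEquiv_apply,
    Option.mem_def, Option.some.injEq]
  by_cases h : π j = i
  · have h2 : π⁻¹ i = j := by rw [← h]; simp
    simp [h, h2]
  · have h2 : ¬ (π⁻¹ i = j) := by
      intro hk; apply h; rw [← hk]; simp
    simp [h, h2]; exact h2

lemma aux_perm_unitary (π : Equiv.Perm (Fin d)) :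
    π.permMatrix ℂ ∈ Matrix.unitaryGroup (Fin d) ℂ := by
  rw [Matrix.mem_unitaryGroup_iff]
  rw [aux_star_perm]
  show (π.toPEquiv.toMatrix : Matrix (Fin d) (Fin d) ℂ) * (π⁻¹).toPEquiv.toMatrix = 1
  rw [← PEquiv.toMatrix_trans, ← Equiv.toPEquiv_trans]
  have : π.trans π⁻¹ = Equiv.refl (Fin d) := Equiv.self_trans_symm π
  rw [this, Equiv.toPEquiv_refl, PEquiv.toMatrix_refl]

lemma aux_energy_diag (ε s : Fin d → ℝ) :
    energy (Matrix.diagonal fun j => (ε j : ℂ)) (Matrix.diagonal fun j => (s j : ℂ))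
      = ∑ j, s j * ε j := by
  unfold energy
  rw [Matrix.diagonal_mul_diagonal, Matrix.trace_diagonal, Complex.re_sum]
  apply Finset.sum_congr rfl
  intro j _
  rw [← Complex.ofReal_mul, Complex.ofReal_re]

lemma aux_energy_formula (ε s : Fin d → ℝ) (U : Matrix (Fin d) (Fin d) ℂ) :
    energy (Matrix.diagonal fun j => (ε j : ℂ))
        (U * (Matrix.diagonal fun j => (s j : ℂ)) * star U)
      = ∑ i, ∑ j, Complex.normSq (U i j) * (s j * ε i) := by
  unfold energy
  have htr : Matrix.trace ((U * (Matrix.diagonal fun j => (s j : ℂ)) * star U) *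
      (Matrix.diagonal fun j => (ε j : ℂ)))
      = ∑ i, ∑ j, (U i j * (s j : ℂ) * (starRingEnd ℂ) (U i j)) * (ε i : ℂ) := by
    rw [Matrix.trace]
    congr 1
    ext i
    rw [Matrix.diag_apply, Matrix.mul_diagonal, Matrix.mul_apply, Finset.sum_mul]
    congr 1
    ext j
    rw [Matrix.mul_diagonal, Matrix.star_apply]
    rfl
  rw [htr]
  have : ∀ i j : Fin d, (U i j * (s j : ℂ) * (starRingEnd ℂ) (U i j)) * (ε i : ℂ)
      = ((Complex.normSq (U i j) * (s j * ε i) : ℝ) : ℂ) := by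
    intro i j
    rw [show U i j * (s j : ℂ) * (starRingEnd ℂ) (U i j)
        = (U i j * (starRingEnd ℂ) (U i j)) * (s j : ℂ) by ring, Complex.mul_conj]
    push_cast
    ring
  simp only [this]
  rw [Complex.re_sum]
  apply Finset.sum_congr rfl
  intro i _
  rw [Complex.re_sum]
  apply Finset.sum_congr rfl
  intro j _
  rw [Complex.ofReal_re]

lemma aux_ds (U : Matrix (Fin d) (Fin d) ℂ) (hU : U ∈ Matrix.unitaryGroup (Fin d) ℂ) :
    (Matrix.of fun i j => Complex.normSq (U i j)) ∈ doublyStochastic ℝ (Fin d) := by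
  rw [mem_doublyStochastic_iff_sum]
  refine ⟨fun i j => Complex.normSq_nonneg _, ?_, ?_⟩
  · intro i
    have h1 : (U * star U) i i = 1 := by
      rw [Matrix.mem_unitaryGroup_iff.mp hU]; simp [Matrix.one_apply]
    rw [Matrix.mul_apply] at h1
    have : (∑ j, U i j * star U j i) = ((∑ j, Complex.normSq (U i j) : ℝ) : ℂ) := by
      rw [Complex.ofReal_sum]
      congr 1; ext j
      rw [Matrix.star_apply, ← Complex.mul_conj]; rfl
    rw [this] at h1
    exact_mod_cast h1
  · intro j
    have h1 : (star U * U) j j = 1 := by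
      rw [Matrix.mem_unitaryGroup_iff'.mp hU]; simp [Matrix.one_apply]
    rw [Matrix.mul_apply] at h1
    have : (∑ i, star U j i * U i j) = ((∑ i, Complex.normSq (U i j) : ℝ) : ℂ) := by
      rw [Complex.ofReal_sum]
      congr 1; ext i
      rw [Matrix.star_apply, mul_comm, ← Complex.mul_conj]; rfl
    rw [this] at h1
    exact_mod_cast h1

lemma aux_main_ineq (ε s : Fin d → ℝ) (hε : StrictMono ε)
    (hs : ∀ i j : Fin d, i ≤ j → s j ≤ s i)
    (B : Matrix (Fin d) (Fin d) ℝ) (hB : B ∈ doublyStochastic ℝ (Fin d)) :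
    ∑ j, s j * ε j ≤ ∑ i, ∑ j, B i j * (s j * ε i) := by
  have hanti : Antivary s ε := by
    intro i j hij
    exact hs i j (le_of_lt ((hε.lt_iff_lt).mp hij))
  rw [← SetLike.mem_coe, doublyStochastic_eq_convexHull_permMatrix] at hB
  have hlin : IsLinearMap ℝ fun M : Matrix (Fin d) (Fin d) ℝ =>
      ∑ i, ∑ j, M i j * (s j * ε i) := by
    constructor
    · intro M N
      simp [Matrix.add_apply, add_mul, Finset.sum_add_distrib]
    · intro c M
      simp [Matrix.smul_apply, smul_eq_mul, mul_assoc, Finset.mul_sum]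
  have hconv := convex_halfSpace_ge hlin (∑ j, s j * ε j)
  have : {M | (∑ j, s j * ε j) ≤ ∑ i, ∑ j, M i j * (s j * ε i)} ⊇
      convexHull ℝ {σ.permMatrix ℝ | σ : Equiv.Perm (Fin d)} := by
    apply convexHull_min ?_ hconv
    rintro M ⟨π, rfl⟩
    simp only [Set.mem_setOf_eq]
    have hentry : ∀ i : Fin d, ∑ j, (π.permMatrix ℝ) i j * (s j * ε i) = s (π i) * ε i := by
      intro i
      rw [Finset.sum_eq_single (π i)]
      · simp [Equiv.Perm.permMatrix, PEquiv.toMatrix_apply, Equiv.toPEquiv_apply]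
      · intro b _ hb
        simp [Equiv.Perm.permMatrix, PEquiv.toMatrix_apply, Equiv.toPEquiv_apply, Ne.symm hb]
      · intro h; exact absurd (Finset.mem_univ _) h
    rw [Finset.sum_congr rfl fun i _ => hentry i]
    have hre : ∑ i, s (π i) * ε i = ∑ k, s k * ε (π.symm k) := by
      rw [← Equiv.sum_comp π (fun k => s k * ε (π.symm k))]
      simp
    rw [hre]
    have := hanti.sum_smul_le_sum_smul_comp_perm (σ := π.symm)
    simpa [smul_eq_mul] using this
  exact this hB

end Aux

theorem passive_iff_nonincreasing {d : ℕ} (ε s : Fin d → ℝ)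
    (hε : StrictMono ε)
    (hσ : IsDensity (Matrix.diagonal fun j => (s j : ℂ))) :
    IsPassive (Matrix.diagonal fun j => (ε j : ℂ)) (Matrix.diagonal fun j => (s j : ℂ)) ↔
      ∀ i j : Fin d, i ≤ j → s j ≤ s i := by
  constructor
  · intro hp i j hij
    rcases eq_or_lt_of_le hij with rfl | hlt
    · exact le_refl _
    · have hij' : i ≠ j := ne_of_lt hlt
      set π := Equiv.swap i j with hπ
      have key := hp (π.permMatrix ℂ) (aux_perm_unitary π)
      rw [aux_energy_diag, aux_energy_formula] at key
      have hentry : ∀ a : Fin d, ∑ b, Complex.normSq ((π.permMatrix ℂ) a b) * (s b * ε a)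
          = s (π a) * ε a := by
        intro a
        rw [Finset.sum_eq_single (π a)]
        · simp [Equiv.Perm.permMatrix, PEquiv.toMatrix_apply, Equiv.toPEquiv_apply]
        · intro b _ hb
          simp [Equiv.Perm.permMatrix, PEquiv.toMatrix_apply, Equiv.toPEquiv_apply, Ne.symm hb]
        · intro h; exact absurd (Finset.mem_univ _) h
      rw [Finset.sum_congr rfl fun a _ => hentry a] at key
      -- split sums at i and j
      have hsplit : ∀ f : Fin d → ℝ, ∑ k, f k
          = f i + (f j + ∑ k ∈ (Finset.univ.erase i).erase j, f k) := by
        intro f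
        rw [← Finset.add_sum_erase Finset.univ f (Finset.mem_univ i),
          ← Finset.add_sum_erase (Finset.univ.erase i) f
            (Finset.mem_erase.mpr ⟨Ne.symm hij', Finset.mem_univ j⟩)]
      rw [hsplit (fun k => s k * ε k), hsplit (fun k => s (π k) * ε k)] at key
      have htail : ∑ k ∈ (Finset.univ.erase i).erase j, s (π k) * ε k
          = ∑ k ∈ (Finset.univ.erase i).erase j, s k * ε k := by
        apply Finset.sum_congr rfl
        intro k hk
        rw [Finset.mem_erase, Finset.mem_erase] at hk
        rw [hπ, Equiv.swap_apply_of_ne_of_ne hk.2.1 hk.1]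
      rw [htail] at key
      have hswap_i : π i = j := Equiv.swap_apply_left i j
      have hswap_j : π j = i := Equiv.swap_apply_right i j
      rw [hswap_i, hswap_j] at key
      have hεlt : ε i < ε j := hε hlt
      nlinarith [key, hεlt]
  · intro hs U hU
    rw [aux_energy_diag, aux_energy_formula]
    exact aux_main_ineq ε s hε hs (Matrix.of fun i j => Complex.normSq (U i j)) (aux_ds U hU)
end
end

section
/- If ρ is a density matrix with S(ρ) = S(ω_β̄) for some β̄ > 0, then tr(ρH) ≥ tr(ω_β̄ H). -/
open Matrix BigOperators
open scoped Classical ComplexOrder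

noncomputable section

section Aux

open Polynomial

lemma aux_charpoly_conj {n : Type*} [Fintype n] [DecidableEq n] (W : (Matrix n n ℂ)ˣ) (A : Matrix n n ℂ) :
    ((W : Matrix n n ℂ) * A * ((W⁻¹ : (Matrix n n ℂ)ˣ) : Matrix n n ℂ)).charpoly = A.charpoly := by
  set Wc : Matrix n n ℂ[X] := C.mapMatrix (W : Matrix n n ℂ) with hWc
  set Wc' : Matrix n n ℂ[X] := C.mapMatrix ((W⁻¹ : (Matrix n n ℂ)ˣ) : Matrix n n ℂ) with hWc'
  have hone : Wc * Wc' = 1 := by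
    rw [hWc, hWc', ← _root_.map_mul, ← Units.val_mul, mul_inv_cancel, Units.val_one, _root_.map_one]
  have hone' : Wc' * Wc = 1 := by
    rw [hWc, hWc', ← _root_.map_mul, ← Units.val_mul, inv_mul_cancel, Units.val_one, _root_.map_one]
  have h1 : charmatrix ((W : Matrix n n ℂ) * A * ((W⁻¹ : (Matrix n n ℂ)ˣ) : Matrix n n ℂ))
      = Wc * charmatrix A * Wc' := by
    rw [charmatrix, charmatrix, _root_.map_mul, _root_.map_mul, mul_sub, sub_mul]
    congr 1
    have hc : Commute (Matrix.scalar n (X : ℂ[X])) Wc' :=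
      Matrix.scalar_commute _ (fun r' => Commute.all _ _) _
    rw [mul_assoc, hc.eq, ← mul_assoc, hone, one_mul]
  rw [Matrix.charpoly, Matrix.charpoly, h1, det_mul, det_mul, mul_comm, ← mul_assoc, ← det_mul,
    hone', det_one, one_mul]

lemma aux_eig_sum {n : ℕ} (A : Matrix (Fin n) (Fin n) ℂ) (hA : A.IsHermitian)
    (W : Matrix (Fin n) (Fin n) ℂ) (hW : W * star W = 1) (hW' : star W * W = 1)
    (q : Fin n → ℝ) (hAW : A = W * diagonal (fun i => (q i : ℂ)) * star W) (f : ℝ → ℝ) :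
    ∑ i, f (hA.eigenvalues i) = ∑ i, f (q i) := by
  have hdiag : ∀ (v : Fin n → ℂ), (Matrix.diagonal v).charpoly = ∏ i, (X - C (v i)) := by
    intro v
    simpa using Matrix.charpoly_of_upperTriangular _ (Matrix.blockTriangular_diagonal v)
  have hcp : ∀ (W : Matrix (Fin n) (Fin n) ℂ) (hW : W * star W = 1) (hW' : star W * W = 1)
      (D : Matrix (Fin n) (Fin n) ℂ), (W * D * star W).charpoly = D.charpoly := by
    intro W hW hW' D
    have := aux_charpoly_conj (Units.mk W (star W) hW hW') D
    simpa using this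
  have hU : A = (hA.eigenvectorUnitary : Matrix (Fin n) (Fin n) ℂ) * diagonal (fun i => ((hA.eigenvalues i : ℝ) : ℂ))
      * star (hA.eigenvectorUnitary : Matrix (Fin n) (Fin n) ℂ) := hA.spectral_theorem
  have h1 : Matrix.charpoly A = ∏ i, (X - C ((hA.eigenvalues i : ℝ) : ℂ)) := by
    conv_lhs => rw [hU]
    rw [hcp _ (Matrix.mem_unitaryGroup_iff.mp (hA.eigenvectorUnitary).2)
      (Matrix.mem_unitaryGroup_iff'.mp (hA.eigenvectorUnitary).2), hdiag]
  have h2 : Matrix.charpoly A = ∏ i, (X - C ((q i : ℝ) : ℂ)) := by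
    rw [hAW, hcp _ hW hW', hdiag]
  have hroots : ∀ (v : Fin n → ℂ), (∏ i, (X - C (v i))).roots = Finset.univ.val.map v := by
    intro v
    have : (∏ i, (X - C (v i))) = ((Finset.univ.val.map v).map (fun a => X - C a)).prod := by
      rw [Multiset.map_map]; rfl
    rw [this, Polynomial.roots_multiset_prod_X_sub_C]
  have hmul : Finset.univ.val.map (fun i => ((hA.eigenvalues i : ℝ) : ℂ))
      = Finset.univ.val.map (fun i => ((q i : ℝ) : ℂ)) := by
    rw [← hroots, ← hroots, ← h1, ← h2]
  have hmulR : Finset.univ.val.map hA.eigenvalues = Finset.univ.val.map q := by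
    have := congrArg (Multiset.map Complex.re) hmul
    simpa [Multiset.map_map, Function.comp_def] using this
  calc ∑ i, f (hA.eigenvalues i) = ((Finset.univ.val.map hA.eigenvalues).map f).sum := by
        rw [Multiset.map_map]; rfl
    _ = ((Finset.univ.val.map q).map f).sum := by rw [hmulR]
    _ = ∑ i, f (q i) := by rw [Multiset.map_map]; rfl

lemma aux_classical {n : ℕ} (p q lam : Fin n → ℝ) (c : Fin n → Fin n → ℝ) (β Z : ℝ)
    (hβ : 0 < β) (hZ : 0 < Z)
    (hp : ∀ i, 0 ≤ p i) (hps : ∑ i, p i = 1)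
    (hq : ∀ j, q j = Real.exp (-β * lam j) / Z) (hqs : ∑ j, q j = 1)
    (hc : ∀ i j, 0 ≤ c i j) (hrow : ∀ i, ∑ j, c i j = 1) (hcol : ∀ j, ∑ i, c i j = 1)
    (hent : ∑ i, Real.negMulLog (p i) = ∑ i, Real.negMulLog (q i)) :
    ∑ j, q j * lam j ≤ ∑ i, ∑ j, c i j * (p i * lam j) := by
  have hqpos : ∀ j, 0 < q j := fun j => by rw [hq]; positivity
  have hlogq : ∀ j, β * lam j = -Real.log (q j) - Real.log Z := by
    intro j
    rw [hq, Real.log_div (Real.exp_pos _).ne' hZ.ne', Real.log_exp]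
    ring
  set r : Fin n → ℝ := fun i => ∑ j, c i j * q j with hr
  have hn : 0 < n := by
    rcases Nat.eq_zero_or_pos n with h | h
    · exfalso; subst h; simp at hps
    · exact h
  have hrpos : ∀ i, 0 < r i := by
    intro i
    have : ∃ j, 0 < c i j := by
      by_contra hcon
      push_neg at hcon
      have hz : ∀ j, c i j = 0 := fun j => le_antisymm (hcon j) (hc i j)
      have := hrow i; simp [hz] at this
    obtain ⟨j1, hj1⟩ := this
    have hterm : 0 < c i j1 * q j1 := mul_pos hj1 (hqpos j1)
    have hsub := Finset.sum_le_sum_of_subset_of_nonneg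
      (Finset.singleton_subset_iff.mpr (Finset.mem_univ j1))
      (fun j _ _ => mul_nonneg (hc i j) (hqpos j).le)
    calc (0:ℝ) < c i j1 * q j1 := hterm
      _ = ∑ j ∈ {j1}, c i j * q j := by simp
      _ ≤ ∑ j, c i j * q j := hsub
  have hrs : ∑ i, r i = 1 := by
    rw [hr]
    rw [Finset.sum_comm]
    simp_rw [← Finset.sum_mul]
    calc ∑ j, (∑ i, c i j) * q j = ∑ j, q j := by
          apply Finset.sum_congr rfl; intro j _; rw [hcol j, one_mul]
      _ = 1 := hqs
  have hjensen : ∀ i, ∑ j, c i j * Real.log (q j) ≤ Real.log (r i) := by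
    intro i
    have := (strictConcaveOn_log_Ioi.concaveOn).le_map_sum
      (t := Finset.univ) (w := c i) (p := q) (fun j _ => hc i j) (hrow i)
      (fun j _ => Set.mem_Ioi.mpr (hqpos j))
    simpa [smul_eq_mul] using this
  have hgibbs : ∑ i, Real.negMulLog (p i) ≤ ∑ i, -(p i * Real.log (r i)) := by
    have hterm : ∀ i, Real.negMulLog (p i) + p i * Real.log (r i) ≤ r i - p i := by
      intro i
      rcases eq_or_lt_of_le (hp i) with h | h
      · simp [← h, Real.negMulLog, (hrpos i).le]
      · have h1 : Real.log (r i / p i) ≤ r i / p i - 1 :=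
          Real.log_le_sub_one_of_pos (div_pos (hrpos i) h)
        have h2 : Real.log (r i / p i) = Real.log (r i) - Real.log (p i) :=
          Real.log_div (hrpos i).ne' h.ne'
        have h3 : p i * Real.log (r i / p i) ≤ p i * (r i / p i - 1) :=
          mul_le_mul_of_nonneg_left h1 (hp i)
        have h4 : p i * (r i / p i - 1) = r i - p i := by field_simp
        rw [h2] at h3
        rw [h4] at h3
        have : Real.negMulLog (p i) + p i * Real.log (r i)
            = p i * (Real.log (r i) - Real.log (p i)) := by
          rw [Real.negMulLog]; ring
        linarith
    have hsum := Finset.sum_le_sum (fun i (_ : i ∈ Finset.univ) => hterm i)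
    rw [Finset.sum_sub_distrib, hrs, hps] at hsum
    have : ∑ i, (Real.negMulLog (p i) + p i * Real.log (r i)) ≤ 0 := by linarith
    rw [Finset.sum_add_distrib] at this
    have heq : ∑ i, -(p i * Real.log (r i)) = -∑ i, p i * Real.log (r i) := by
      rw [Finset.sum_neg_distrib]
    linarith [heq]
  have hkey : ∑ i, Real.negMulLog (q i) ≤ ∑ i, p i * (∑ j, c i j * (-Real.log (q j))) := by
    calc ∑ i, Real.negMulLog (q i) = ∑ i, Real.negMulLog (p i) := hent.symm
      _ ≤ ∑ i, -(p i * Real.log (r i)) := hgibbs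
      _ ≤ ∑ i, p i * (∑ j, c i j * (-Real.log (q j))) := by
          apply Finset.sum_le_sum
          intro i _
          have h1 : ∑ j, c i j * (-Real.log (q j)) = -(∑ j, c i j * Real.log (q j)) := by
            rw [← Finset.sum_neg_distrib]; congr 1; funext j; ring
          rw [h1]
          nlinarith [hp i, hjensen i]
  have hL : β * (∑ j, q j * lam j) = (∑ j, Real.negMulLog (q j)) - Real.log Z := by
    rw [Finset.mul_sum]
    have hterm : ∀ j, β * (q j * lam j) = Real.negMulLog (q j) - q j * Real.log Z := by
      intro j
      have h := hlogq j
      calc β * (q j * lam j) = q j * (β * lam j) := by ring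
        _ = q j * (-Real.log (q j) - Real.log Z) := by rw [h]
        _ = Real.negMulLog (q j) - q j * Real.log Z := by rw [Real.negMulLog]; ring
    rw [Finset.sum_congr rfl (fun j _ => hterm j), Finset.sum_sub_distrib, ← Finset.sum_mul, hqs,
      one_mul]
  have hR : β * (∑ i, ∑ j, c i j * (p i * lam j))
      = (∑ i, p i * (∑ j, c i j * (-Real.log (q j)))) - Real.log Z := by
    rw [Finset.mul_sum]
    have hterm : ∀ i, β * ∑ j, c i j * (p i * lam j)
        = p i * (∑ j, c i j * (-Real.log (q j))) - p i * Real.log Z := by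
      intro i
      rw [Finset.mul_sum, Finset.mul_sum]
      have hj : ∀ j, β * (c i j * (p i * lam j))
          = p i * (c i j * (-Real.log (q j))) - c i j * (p i * Real.log Z) := by
        intro j
        have h := hlogq j
        calc β * (c i j * (p i * lam j)) = c i j * p i * (β * lam j) := by ring
          _ = c i j * p i * (-Real.log (q j) - Real.log Z) := by rw [h]
          _ = p i * (c i j * (-Real.log (q j))) - c i j * (p i * Real.log Z) := by ring
      rw [Finset.sum_congr rfl (fun j _ => hj j), Finset.sum_sub_distrib]
      congr 1
      calc ∑ j, c i j * (p i * Real.log Z) = (∑ j, c i j) * (p i * Real.log Z) := by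
            rw [Finset.sum_mul]
        _ = p i * Real.log Z := by rw [hrow i, one_mul]
    rw [Finset.sum_congr rfl (fun i _ => hterm i), Finset.sum_sub_distrib, ← Finset.sum_mul, hps,
      one_mul]
  have hfin : β * (∑ j, q j * lam j) ≤ β * (∑ i, ∑ j, c i j * (p i * lam j)) := by
    rw [hL, hR]
    linarith [hkey]
  exact le_of_mul_le_mul_left hfin hβ

lemma aux_conj_mul_conj {n : Type*} [Fintype n] [DecidableEq n]
    (U A B : Matrix n n ℂ) (hU' : star U * U = 1) :
    (U * A * star U) * (U * B * star U) = U * (A * B) * star U := by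
  calc (U * A * star U) * (U * B * star U) = U * (A * ((star U * U) * (B * star U))) := by
        simp only [Matrix.mul_assoc]
    _ = U * (A * B) * star U := by rw [hU', Matrix.one_mul, Matrix.mul_assoc, Matrix.mul_assoc]

lemma aux_trace_conj {n : Type*} [Fintype n] [DecidableEq n]
    (U A : Matrix n n ℂ) (hU' : star U * U = 1) :
    Matrix.trace (U * A * star U) = Matrix.trace A := by
  rw [Matrix.trace_mul_cycle, hU', Matrix.one_mul]

lemma aux_herm {n : Type*} [Fintype n] [DecidableEq n] (W : Matrix n n ℂ) (q : n → ℝ) :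
    (W * Matrix.diagonal (fun i => ((q i : ℝ) : ℂ)) * star W).IsHermitian := by
  have hD : (Matrix.diagonal (fun i => ((q i : ℝ) : ℂ))).IsHermitian := by
    rw [Matrix.IsHermitian, Matrix.diagonal_conjTranspose]
    funext i j
    by_cases h : i = j <;> simp [Matrix.diagonal, Matrix.of_apply, h, Complex.conj_ofReal]
  rw [Matrix.IsHermitian, Matrix.conjTranspose_mul, Matrix.conjTranspose_mul]
  rw [Matrix.star_eq_conjTranspose, Matrix.conjTranspose_conjTranspose, hD.eq]
  rw [Matrix.mul_assoc]

end Aux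

theorem energy_ge_gibbs_of_entropy_eq {d : ℕ} (H ρ : Matrix (Fin d) (Fin d) ℂ)
    (hH : H.IsHermitian) (hρ : IsDensity ρ) (β : ℝ) (hβ : 0 < β)
    (hS : vnEntropy ρ = vnEntropy (gibbs H β)) :
    energy H (gibbs H β) ≤ energy H ρ := by
  -- d = 0 is impossible since trace ρ = 1
  rcases Nat.eq_zero_or_pos d with hd | hd
  · exfalso
    have := hρ.2
    subst hd
    simp [Matrix.trace] at this
  have hne : Nonempty (Fin d) := Fin.pos_iff_nonempty.mp hd
  -- spectral data of H
  set lam := hH.eigenvalues with hlamdef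
  set U : Matrix (Fin d) (Fin d) ℂ := (hH.eigenvectorUnitary : Matrix (Fin d) (Fin d) ℂ) with hUdef
  have hU : U * star U = 1 := Matrix.mem_unitaryGroup_iff.mp (hH.eigenvectorUnitary).2
  have hU' : star U * U = 1 := Matrix.mem_unitaryGroup_iff'.mp (hH.eigenvectorUnitary).2
  have hHspec : H = U * diagonal (fun i => ((lam i : ℝ) : ℂ)) * star U := hH.spectral_theorem
  have hUu : IsUnit U := Matrix.isUnit_iff_isUnit_det U |>.mpr
    (IsUnit.of_mul_eq_one _ (by rw [← Matrix.det_mul, hU, Matrix.det_one]))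
  have hUinv : U⁻¹ = star U := Matrix.inv_eq_left_inv hU'
  -- exponential
  have hsmul : (-β : ℂ) • H = U * diagonal (fun i => ((-β * lam i : ℝ) : ℂ)) * star U := by
    have hv : ((-β : ℂ) • fun i => ((lam i : ℝ) : ℂ)) = fun i => ((-β * lam i : ℝ) : ℂ) := by
      funext i
      push_cast
      simp [smul_eq_mul]
    have hdiag : ((-β : ℂ) • diagonal (fun i => ((lam i : ℝ) : ℂ)))
        = diagonal (fun i => ((-β * lam i : ℝ) : ℂ)) := by
      rw [← Matrix.diagonal_smul]
      exact congrArg Matrix.diagonal hv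
    rw [hHspec, ← Matrix.smul_mul, ← Matrix.mul_smul, hdiag]
  have hE : NormedSpace.exp ((-β : ℂ) • H)
      = U * diagonal (fun i => ((Real.exp (-β * lam i) : ℝ) : ℂ)) * star U := by
    rw [hsmul, ← hUinv, Matrix.exp_conj U _ hUu, Matrix.exp_diagonal, hUinv]
    have hv : (NormedSpace.exp (fun i => ((-β * lam i : ℝ) : ℂ)) : Fin d → ℂ)
        = fun i => ((Real.exp (-β * lam i) : ℝ) : ℂ) := by
      rw [Pi.exp_def]
      funext i
      rw [← Complex.exp_eq_exp_ℂ, ← Complex.ofReal_exp]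
    rw [hv]
  -- partition function
  set Zr : ℝ := ∑ i, Real.exp (-β * lam i) with hZrdef
  have hZrpos : 0 < Zr := Finset.sum_pos (fun i _ => Real.exp_pos _) Finset.univ_nonempty
  have htrE : Matrix.trace (NormedSpace.exp ((-β : ℂ) • H)) = (Zr : ℂ) := by
    rw [hE, aux_trace_conj _ _ hU', Matrix.trace_diagonal, hZrdef]
    norm_cast
  -- the Gibbs state in diagonal form
  set q : Fin d → ℝ := fun i => Real.exp (-β * lam i) / Zr with hqdef
  have hgibbs : gibbs H β = U * diagonal (fun i => ((q i : ℝ) : ℂ)) * star U := by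
    have hv2 : (((Zr : ℂ))⁻¹ • fun i => ((Real.exp (-β * lam i) : ℝ) : ℂ))
        = fun i => ((q i : ℝ) : ℂ) := by
      funext i
      rw [Pi.smul_apply, smul_eq_mul, show q i = Real.exp (-β * lam i) / Zr from rfl,
        div_eq_inv_mul]
      push_cast
      ring
    rw [gibbs, htrE, hE, ← Matrix.smul_mul, ← Matrix.mul_smul, ← Matrix.diagonal_smul, hv2]
  have hqpos : ∀ i, 0 < q i := fun i => by rw [hqdef]; exact div_pos (Real.exp_pos _) hZrpos
  have hqsum : ∑ i, q i = 1 := by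
    rw [hqdef, ← Finset.sum_div, ← hZrdef, div_self hZrpos.ne']
  -- energy of the Gibbs state
  have hEgibbs : energy H (gibbs H β) = ∑ i, q i * lam i := by
    rw [energy, hgibbs]
    conv_lhs => rw [hHspec]
    rw [aux_conj_mul_conj _ _ _ hU', aux_trace_conj _ _ hU', Matrix.diagonal_mul_diagonal,
      Matrix.trace_diagonal]
    have h4 : (∑ i, ((q i : ℂ) * (lam i : ℂ))) = ((∑ i, q i * lam i : ℝ) : ℂ) := by norm_cast
    rw [h4, Complex.ofReal_re]
  -- spectral data of ρ
  have hρH : ρ.IsHermitian := hρ.1.1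
  set pv := hρH.eigenvalues with hpvdef
  set V : Matrix (Fin d) (Fin d) ℂ := (hρH.eigenvectorUnitary : Matrix (Fin d) (Fin d) ℂ) with hVdef
  have hV : V * star V = 1 := Matrix.mem_unitaryGroup_iff.mp (hρH.eigenvectorUnitary).2
  have hV' : star V * V = 1 := Matrix.mem_unitaryGroup_iff'.mp (hρH.eigenvectorUnitary).2
  have hρspec : ρ = V * diagonal (fun i => ((pv i : ℝ) : ℂ)) * star V := hρH.spectral_theorem
  have hpnonneg : ∀ i, 0 ≤ pv i := fun i => hρ.1.eigenvalues_nonneg i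
  have hpsum : ∑ i, pv i = 1 := by
    have h1 : Matrix.trace ρ = ((∑ i, pv i : ℝ) : ℂ) := by
      conv_lhs => rw [hρspec]
      rw [aux_trace_conj _ _ hV', Matrix.trace_diagonal]
      push_cast
      rfl
    rw [hρ.2] at h1
    exact_mod_cast h1.symm
  -- overlap matrix
  set M : Matrix (Fin d) (Fin d) ℂ := star V * U with hMdef
  have hsM : star M = star U * V := by rw [hMdef, Matrix.star_mul, star_star]
  have hM : M * star M = 1 := by
    rw [hMdef, hsM, Matrix.mul_assoc, ← Matrix.mul_assoc U _ _, hU, Matrix.one_mul, hV']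
  have hM' : star M * M = 1 := by
    rw [hMdef, hsM, Matrix.mul_assoc, ← Matrix.mul_assoc V _ _, hV, Matrix.one_mul, hU']
  set c : Fin d → Fin d → ℝ := fun i j => Complex.normSq (M i j) with hcdef
  have hcnonneg : ∀ i j, 0 ≤ c i j := fun i j => Complex.normSq_nonneg _
  have hrow : ∀ i, ∑ j, c i j = 1 := by
    intro i
    have h1 : (M * star M) i i = 1 := by rw [hM]; simp
    rw [Matrix.mul_apply] at h1
    have h2 : ∀ j, M i j * (star M) j i = ((c i j : ℝ) : ℂ) := by
      intro j
      rw [Matrix.star_apply, hcdef]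
      exact Complex.mul_conj (M i j)
    rw [Finset.sum_congr rfl (fun j _ => h2 j)] at h1
    exact_mod_cast h1
  have hcol : ∀ j, ∑ i, c i j = 1 := by
    intro j
    have h1 : (star M * M) j j = 1 := by rw [hM']; simp
    rw [Matrix.mul_apply] at h1
    have h2 : ∀ i, (star M) j i * M i j = ((c i j : ℝ) : ℂ) := by
      intro i
      rw [Matrix.star_apply, hcdef, mul_comm]
      exact Complex.mul_conj (M i j)
    rw [Finset.sum_congr rfl (fun i _ => h2 i)] at h1
    exact_mod_cast h1
  -- energy of ρ
  have hEρ : energy H ρ = ∑ i, ∑ j, c i j * (pv i * lam j) := by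
    rw [energy]
    conv_lhs => rw [hρspec, hHspec]
    have h1 : (V * diagonal (fun i => ((pv i : ℝ) : ℂ)) * star V)
          * (U * diagonal (fun i => ((lam i : ℝ) : ℂ)) * star U)
        = V * (diagonal (fun i => ((pv i : ℝ) : ℂ)) * M * diagonal (fun i => ((lam i : ℝ) : ℂ))
            * star M) * star V := by
      rw [hMdef, hsM]
      simp only [Matrix.mul_assoc]
      rw [hV]
      simp only [Matrix.mul_one]
    rw [h1, aux_trace_conj _ _ hV']
    have h2 : ∀ i, (diagonal (fun i => ((pv i : ℝ) : ℂ)) * M * diagonal (fun i => ((lam i : ℝ) : ℂ))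
        * star M) i i = ((∑ j, c i j * (pv i * lam j) : ℝ) : ℂ) := by
      intro i
      rw [Matrix.mul_apply]
      have h3 : ∀ j, (diagonal (fun i => ((pv i : ℝ) : ℂ)) * M
            * diagonal (fun i => ((lam i : ℝ) : ℂ))) i j * (star M) j i
          = ((c i j * (pv i * lam j) : ℝ) : ℂ) := by
        intro j
        rw [Matrix.mul_diagonal, Matrix.diagonal_mul, Matrix.star_apply, Complex.star_def]
        have h5 : (pv i : ℂ) * M i j * (lam j : ℂ) * (starRingEnd ℂ) (M i j)
            = (M i j * (starRingEnd ℂ) (M i j)) * ((pv i : ℂ) * (lam j : ℂ)) := by ring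
        rw [h5, Complex.mul_conj]
        rw [show c i j = Complex.normSq (M i j) from rfl]
        push_cast
        ring
      rw [Finset.sum_congr rfl (fun j _ => h3 j)]
      norm_cast
    rw [Matrix.trace]
    simp only [Matrix.diag_apply]
    rw [Finset.sum_congr rfl (fun i _ => h2 i)]
    have h6 : (∑ i, ((∑ j, c i j * (pv i * lam j) : ℝ) : ℂ))
        = ((∑ i, ∑ j, c i j * (pv i * lam j) : ℝ) : ℂ) := by norm_cast
    rw [h6, Complex.ofReal_re]
  -- entropies
  have hSρ : vnEntropy ρ = ∑ i, Real.negMulLog (pv i) := by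
    rw [vnEntropy, dif_pos hρH]
  have hg : (gibbs H β).IsHermitian := by
    rw [hgibbs]; exact aux_herm U q
  have hSg : vnEntropy (gibbs H β) = ∑ i, Real.negMulLog (q i) := by
    rw [vnEntropy, dif_pos hg]
    exact aux_eig_sum _ hg U hU hU' q hgibbs Real.negMulLog
  -- conclude
  rw [hEgibbs, hEρ]
  exact aux_classical pv q lam c β Zr hβ hZrpos hpnonneg hpsum (fun j => rfl) hqsum
    hcnonneg hrow hcol (by rw [← hSρ, ← hSg, hS])

end
end

section
/- A Gibbs state ω_β (β ≥ 0) is passive: tr(ω_β H) ≤ tr(U ω_β U† H) for every unitary U. -/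
open Matrix BigOperators
open scoped Classical ComplexOrder

noncomputable section

lemma sum_p_f_right {ι : Type*} [Fintype ι] (p : ι → ι → ℝ) (f : ι → ℝ)
    (hcol : ∀ j, ∑ i, p i j = 1) :
    ∑ i, ∑ j, p i j * f j = ∑ j, f j := by
  rw [Finset.sum_comm]
  refine Finset.sum_congr rfl fun j _ => ?_
  rw [← Finset.sum_mul, hcol j, one_mul]

lemma sum_p_f_left {ι : Type*} [Fintype ι] (p : ι → ι → ℝ) (f : ι → ℝ)
    (hrow : ∀ i, ∑ j, p i j = 1) :
    ∑ i, ∑ j, p i j * f i = ∑ i, f i := by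
  refine Finset.sum_congr rfl fun i _ => ?_
  rw [← Finset.sum_mul, hrow i, one_mul]

lemma key_real {ι : Type*} [Fintype ι] (p : ι → ι → ℝ) (E : ι → ℝ) (β : ℝ) (hβ : 0 ≤ β)
    (hp : ∀ i j, 0 ≤ p i j) (hrow : ∀ i, ∑ j, p i j = 1) (hcol : ∀ j, ∑ i, p i j = 1) :
    ∑ j, Real.exp (-β * E j) * E j ≤ ∑ i, ∑ j, p i j * (Real.exp (-β * E j) * E i) := by
  have hmain : (0:ℝ) ≤ ∑ i, ∑ j, p i j * (Real.exp (-β * E j) * (E i - E j)) := by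
    rcases eq_or_lt_of_le hβ with hb0 | hb0
    · subst hb0
      simp only [zero_mul, neg_zero, Real.exp_zero, one_mul]
      have : ∑ i, ∑ j, p i j * (E i - E j)
          = (∑ i, ∑ j, p i j * E i) - ∑ i, ∑ j, p i j * E j := by
        simp_rw [mul_sub, Finset.sum_sub_distrib]
      rw [this, sum_p_f_left p E hrow, sum_p_f_right p E hcol, sub_self]
    · have hpt : ∀ i j : ι, (Real.exp (-β * E j) - Real.exp (-β * E i)) / β
          ≤ Real.exp (-β * E j) * (E i - E j) := by
        intro i j
        rw [div_le_iff₀ hb0]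
        have h1 : 1 + (-β * E i - -β * E j) ≤ Real.exp (-β * E i - -β * E j) := by
          have := Real.add_one_le_exp (-β * E i - -β * E j); linarith
        have h2 := mul_le_mul_of_nonneg_left h1 (Real.exp_pos (-β * E j)).le
        rw [← Real.exp_add] at h2
        have h3 : -β * E j + (-β * E i - -β * E j) = -β * E i := by ring
        rw [h3] at h2
        nlinarith [Real.exp_pos (-β * E j), Real.exp_pos (-β * E i)]
      have h1 : ∑ i, ∑ j, p i j * ((Real.exp (-β * E j) - Real.exp (-β * E i)) / β)
          ≤ ∑ i, ∑ j, p i j * (Real.exp (-β * E j) * (E i - E j)) :=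
        Finset.sum_le_sum fun i _ => Finset.sum_le_sum fun j _ =>
          mul_le_mul_of_nonneg_left (hpt i j) (hp i j)
      refine le_trans (le_of_eq ?_) h1
      have : ∑ i, ∑ j, p i j * ((Real.exp (-β * E j) - Real.exp (-β * E i)) / β)
          = ((∑ i, ∑ j, p i j * Real.exp (-β * E j))
            - ∑ i, ∑ j, p i j * Real.exp (-β * E i)) / β := by
        simp_rw [← mul_div_assoc, ← Finset.sum_div]
        congr 1
        simp_rw [mul_sub, Finset.sum_sub_distrib]
      rw [this, sum_p_f_right p _ hcol, sum_p_f_left p _ hrow, sub_self, zero_div]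
  have hR : ∑ i, ∑ j, p i j * (Real.exp (-β * E j) * E i)
      = (∑ i, ∑ j, p i j * (Real.exp (-β * E j) * (E i - E j)))
        + ∑ i, ∑ j, p i j * (Real.exp (-β * E j) * E j) := by
    simp_rw [← Finset.sum_add_distrib]; congr 1; ext i; congr 1; ext j; ring
  have hL : ∑ i, ∑ j, p i j * (Real.exp (-β * E j) * E j)
      = ∑ j, Real.exp (-β * E j) * E j := sum_p_f_right p _ hcol
  rw [hR, hL]
  linarith

theorem gibbs_passive {d : ℕ} (H : Matrix (Fin d) (Fin d) ℂ)
    (hH : H.IsHermitian) (β : ℝ) (hβ : 0 ≤ β) :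
    IsPassive H (gibbs H β) := by
  intro U hU
  set V : Matrix (Fin d) (Fin d) ℂ := (hH.eigenvectorUnitary : Matrix (Fin d) (Fin d) ℂ) with hVdef
  set E : Fin d → ℝ := hH.eigenvalues with hEdef
  have hV1 : star V * V = 1 := (Unitary.mem_iff.mp hH.eigenvectorUnitary.2).1
  have hV2 : V * star V = 1 := (Unitary.mem_iff.mp hH.eigenvectorUnitary.2).2
  have cancelV : ∀ A : Matrix (Fin d) (Fin d) ℂ, star V * (V * A) = A := fun A => by
    rw [← mul_assoc, hV1, one_mul]
  have cancelV' : ∀ A : Matrix (Fin d) (Fin d) ℂ, V * (star V * A) = A := fun A => by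
    rw [← mul_assoc, hV2, one_mul]
  set e : Fin d → ℂ := fun i => (E i : ℂ) with hedef
  have hspec : H = V * diagonal e * star V := by
    have := hH.spectral_theorem; rw [Unitary.conjStarAlgAut_apply] at this; exact this
  set w : Fin d → ℝ := fun i => Real.exp (-β * E i) with hwdef
  -- exponential
  have hexp : NormedSpace.exp ((-β : ℂ) • H) = V * diagonal (fun i => (w i : ℂ)) * star V := by
    have h1 : (-β : ℂ) • H = V * diagonal (fun i => (-β : ℂ) * e i) * star V := by
      rw [hspec]
      have hd : diagonal (fun i => (-β : ℂ) * e i) = (-β : ℂ) • diagonal e := by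
        rw [← diagonal_smul]
        rfl
      rw [hd, mul_smul_comm, smul_mul_assoc]
    rw [h1]
    let u : (Matrix (Fin d) (Fin d) ℂ)ˣ := ⟨V, star V, hV2, hV1⟩
    have h2 : NormedSpace.exp (V * diagonal (fun i => (-β : ℂ) * e i) * star V)
        = V * NormedSpace.exp (diagonal (fun i => (-β : ℂ) * e i)) * star V :=
      Matrix.exp_units_conj u _
    rw [h2, Matrix.exp_diagonal, Pi.exp_def]
    congr 2
    funext i
    rw [← Complex.exp_eq_exp_ℂ, hwdef, hedef]
    push_cast
    rfl
  -- trace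
  set Z : ℝ := ∑ i, w i with hZdef
  have htr : Matrix.trace (NormedSpace.exp ((-β : ℂ) • H)) = (Z : ℂ) := by
    rw [hexp, Matrix.trace_mul_comm (V * diagonal fun i => (w i : ℂ)) (star V), cancelV,
      Matrix.trace_diagonal]
    rw [hZdef, Complex.ofReal_sum]
  have hZnn : 0 ≤ Z := Finset.sum_nonneg fun i _ => (Real.exp_pos _).le
  -- gibbs as conjugated diagonal
  set g : Fin d → ℂ := fun j => ((Z⁻¹ * w j : ℝ) : ℂ) with hgdef
  have hg : gibbs H β = V * diagonal g * star V := by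
    rw [gibbs, htr, hexp]
    have hd : diagonal g = ((Z : ℂ))⁻¹ • diagonal (fun i => ((w i : ℝ) : ℂ)) := by
      rw [← diagonal_smul]
      congr 1
      funext j
      rw [hgdef]
      have : ((Z : ℂ))⁻¹ • (fun i => ((w i : ℝ) : ℂ)) = fun i => ((Z : ℂ))⁻¹ * (w i : ℂ) := rfl
      rw [this]
      push_cast
      ring
    rw [hd, mul_smul_comm, smul_mul_assoc]
  -- the unitary W
  set W : Matrix (Fin d) (Fin d) ℂ := star V * U * V with hWdef
  have hU1 : star U * U = 1 := (Unitary.mem_iff.mp hU).1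
  have hU2 : U * star U = 1 := (Unitary.mem_iff.mp hU).2
  have cancelU : ∀ A : Matrix (Fin d) (Fin d) ℂ, star U * (U * A) = A := fun A => by
    rw [← mul_assoc, hU1, one_mul]
  have cancelU' : ∀ A : Matrix (Fin d) (Fin d) ℂ, U * (star U * A) = A := fun A => by
    rw [← mul_assoc, hU2, one_mul]
  have hsW : star W = star V * star U * V := by
    rw [hWdef, Matrix.star_mul, Matrix.star_mul, star_star]
    rw [mul_assoc]
  have hW1 : star W * W = 1 := by
    rw [hsW, hWdef]
    calc star V * star U * V * (star V * U * V)
        = star V * (star U * (V * (star V * (U * V)))) := by simp only [mul_assoc]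
      _ = 1 := by rw [cancelV', cancelU, hV1]
  have hW2 : W * star W = 1 := by
    rw [hsW, hWdef]
    calc star V * U * V * (star V * star U * V)
        = star V * (U * (V * (star V * (star U * V)))) := by simp only [mul_assoc]
      _ = 1 := by rw [cancelV', cancelU', hV1]
  -- conjugated state
  have hUVW : U = V * W * star V := by
    rw [hWdef]
    simp only [mul_assoc, cancelV', hV2, mul_one]
  have hconj : U * gibbs H β * star U = V * (W * diagonal g * star W) * star V := by
    rw [hg]
    conv_lhs => rw [hUVW]
    rw [Matrix.star_mul, Matrix.star_mul, star_star]
    simp only [mul_assoc, cancelV]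
  -- trace helper
  have htr2 : ∀ A : Matrix (Fin d) (Fin d) ℂ,
      Matrix.trace (V * A * star V * H) = Matrix.trace (A * diagonal e) := by
    intro A
    conv_lhs => rw [hspec]
    have h1 : V * A * star V * (V * diagonal e * star V) = V * (A * (diagonal e * star V)) := by
      simp only [mul_assoc, cancelV]
    rw [h1, Matrix.trace_mul_comm V (A * (diagonal e * star V))]
    simp only [mul_assoc]
    rw [hV1, mul_one]
  -- energies
  set p : Fin d → Fin d → ℝ := fun i j => Complex.normSq (W i j) with hpdef
  have hterm : ∀ i j : Fin d, (W i j * g j * (starRingEnd ℂ) (W i j) * e i).re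
      = p i j * (Z⁻¹ * w j * E i) := by
    intro i j
    have h1 : W i j * g j * (starRingEnd ℂ) (W i j) * e i
        = (W i j * (starRingEnd ℂ) (W i j)) * (g j * e i) := by ring
    rw [h1, Complex.mul_conj, hgdef, hedef, hpdef]
    have : ((Complex.normSq (W i j) : ℂ)) * (((Z⁻¹ * w j : ℝ) : ℂ) * ((E i : ℝ) : ℂ))
        = ((Complex.normSq (W i j) * (Z⁻¹ * w j * E i) : ℝ) : ℂ) := by
      push_cast; ring
    rw [this, Complex.ofReal_re]
  have hE1 : energy H (gibbs H β) = ∑ j, Z⁻¹ * w j * E j := by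
    rw [energy, hg, htr2, diagonal_mul_diagonal, Matrix.trace_diagonal]
    rw [Complex.re_sum]
    refine Finset.sum_congr rfl fun j _ => ?_
    rw [hgdef, hedef]
    have : ((Z⁻¹ * w j : ℝ) : ℂ) * ((E j : ℝ) : ℂ) = ((Z⁻¹ * w j * E j : ℝ) : ℂ) := by
      push_cast; ring
    rw [this, Complex.ofReal_re]
  have hE2 : energy H (U * gibbs H β * star U) = ∑ i, ∑ j, p i j * (Z⁻¹ * w j * E i) := by
    rw [energy, hconj, htr2, Matrix.trace]
    have hdiagentry : ∀ i, (W * diagonal g * star W * diagonal e) i i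
        = ∑ j, W i j * g j * (starRingEnd ℂ) (W i j) * e i := by
      intro i
      rw [Matrix.mul_diagonal, Matrix.mul_apply, Finset.sum_mul]
      refine Finset.sum_congr rfl fun j _ => ?_
      rw [Matrix.mul_diagonal, Matrix.star_apply, RCLike.star_def]
    rw [Complex.re_sum]
    refine Finset.sum_congr rfl fun i _ => ?_
    rw [Matrix.diag_apply, hdiagentry i, Complex.re_sum]
    exact Finset.sum_congr rfl fun j _ => hterm i j
  -- doubly stochastic
  have hrowsum : ∀ i, ∑ j, p i j = 1 := by
    intro i
    have h := congrArg (fun M : Matrix (Fin d) (Fin d) ℂ => M i i) hW2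
    simp only [Matrix.mul_apply, Matrix.star_apply, Matrix.one_apply_eq,
      RCLike.star_def] at h
    have h2 : ((∑ j, p i j : ℝ) : ℂ) = 1 := by
      push_cast
      rw [← h]
      exact Finset.sum_congr rfl fun j _ => (Complex.mul_conj (W i j)).symm
    exact_mod_cast h2
  have hcolsum : ∀ j, ∑ i, p i j = 1 := by
    intro j
    have h := congrArg (fun M : Matrix (Fin d) (Fin d) ℂ => M j j) hW1
    simp only [Matrix.mul_apply, Matrix.star_apply, Matrix.one_apply_eq,
      RCLike.star_def] at h
    have h2 : ((∑ i, p i j : ℝ) : ℂ) = 1 := by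
      push_cast
      rw [← h]
      refine Finset.sum_congr rfl fun i _ => ?_
      rw [hpdef, ← Complex.mul_conj (W i j)]
      ring
    exact_mod_cast h2
  -- final inequality
  have hkey := key_real p E β hβ (fun i j => Complex.normSq_nonneg _) hrowsum hcolsum
  have hmul := mul_le_mul_of_nonneg_left hkey (inv_nonneg.mpr hZnn)
  rw [hE1, hE2]
  calc ∑ j, Z⁻¹ * w j * E j = Z⁻¹ * ∑ j, Real.exp (-β * E j) * E j := by
        rw [Finset.mul_sum]
        exact Finset.sum_congr rfl fun j _ => by rw [hwdef]; ring
    _ ≤ Z⁻¹ * ∑ i, ∑ j, p i j * (Real.exp (-β * E j) * E i) := hmul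
    _ = ∑ i, ∑ j, p i j * (Z⁻¹ * w j * E i) := by
        rw [Finset.mul_sum]
        refine Finset.sum_congr rfl fun i _ => ?_
        rw [Finset.mul_sum]
        exact Finset.sum_congr rfl fun j _ => by rw [hwdef]; ring
end
end

section
/- A Gibbs state is completely passive: for every n ≥ 1, the n-fold tensor product ⊗^n ω_β is passive with respect to the sum Hamiltonian H^(n) = Σ_{j=1}^n H_j, i.e., tr((⊗^n ω_β) H^(n)) ≤ tr(U(⊗^n ω_β)U† H^(n)) for every unitary U on the n-fold tensor product space. -/
open Matrix BigOperators
open scoped Classical ComplexOrder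

noncomputable section

namespace GibbsAux

variable {ι : Type*} [Fintype ι] [DecidableEq ι]

/-- Core real inequality: doubly stochastic mixing of a Gibbs distribution
does not decrease energy. -/
lemma core_ineq (B : ι → ι → ℝ) (Λ : ι → ℝ) (β : ℝ) (hβ : 0 ≤ β)
    (hB : ∀ i j, 0 ≤ B i j) (hrow : ∀ i, ∑ j, B i j = 1) (hcol : ∀ j, ∑ i, B i j = 1) :
    ∑ i, Real.exp (-(β * Λ i)) * Λ i ≤ ∑ i, ∑ j, B i j * (Real.exp (-(β * Λ j)) * Λ i) := by
  set p : ι → ℝ := fun i => Real.exp (-(β * Λ i)) with hp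
  have hL : ∑ i, p i * Λ i = ∑ i, ∑ j, B i j * (p j * Λ j) := by
    rw [Finset.sum_comm]
    refine (Finset.sum_congr rfl fun j _ => ?_).symm
    rw [← Finset.sum_mul, hcol, one_mul]
  have hΔ : (∑ i, ∑ j, B i j * (p j * Λ i)) - (∑ i, ∑ j, B i j * (p j * Λ j))
      = ∑ i, ∑ j, B i j * (p j * Λ i - p j * Λ j) := by
    simp_rw [mul_sub, Finset.sum_sub_distrib]
  rw [hL, ← sub_nonneg, hΔ]
  rcases eq_or_lt_of_le hβ with hβ0 | hβpos
  · -- β = 0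
    have hp1 : ∀ j, p j = 1 := fun j => by rw [hp]; simp [← hβ0]
    have h1 : ∑ i, ∑ j, B i j * Λ i = ∑ i, Λ i := by
      refine Finset.sum_congr rfl fun i _ => ?_
      rw [← Finset.sum_mul, hrow, one_mul]
    have h2 : ∑ i, ∑ j, B i j * Λ j = ∑ j, Λ j := by
      rw [Finset.sum_comm]
      refine Finset.sum_congr rfl fun j _ => ?_
      rw [← Finset.sum_mul, hcol, one_mul]
    simp_rw [hp1, one_mul, mul_sub, Finset.sum_sub_distrib]
    rw [h1, h2, sub_self]
  · -- β > 0
    have key : ∀ i j, B i j * (p j - p i) ≤ β * (B i j * (p j * Λ i - p j * Λ j)) := by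
      intro i j
      have h1 : β * Λ j - β * Λ i + 1 ≤ Real.exp (β * Λ j - β * Λ i) :=
        Real.add_one_le_exp _
      have h2 : p j * Real.exp (β * Λ j - β * Λ i) = p i := by
        rw [hp, ← Real.exp_add]; ring_nf
      have h3 : 0 < p j := Real.exp_pos _
      nlinarith [hB i j, mul_le_mul_of_nonneg_left h1 h3.le]
    have hsum : ∑ i, ∑ j, B i j * (p j - p i) ≤
        β * ∑ i, ∑ j, B i j * (p j * Λ i - p j * Λ j) := by
      rw [Finset.mul_sum]
      refine Finset.sum_le_sum fun i _ => ?_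
      rw [Finset.mul_sum]
      exact Finset.sum_le_sum fun j _ => key i j
    have hzero : ∑ i, ∑ j, B i j * (p j - p i) = 0 := by
      simp_rw [mul_sub, Finset.sum_sub_distrib]
      have h1 : ∑ i, ∑ j, B i j * p j = ∑ j, p j := by
        rw [Finset.sum_comm]
        refine Finset.sum_congr rfl fun j _ => ?_
        rw [← Finset.sum_mul, hcol, one_mul]
      have h2 : ∑ i, ∑ j, B i j * p i = ∑ i, p i := by
        refine Finset.sum_congr rfl fun i _ => ?_
        rw [← Finset.sum_mul, hrow, one_mul]
      rw [h1, h2, sub_self]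
    have h0 : β * 0 ≤ β * ∑ i, ∑ j, B i j * (p j * Λ i - p j * Λ j) := by
      rw [mul_zero, ← hzero]; exact hsum
    exact le_of_mul_le_mul_left h0 hβpos

lemma re_trace_conj (V : Matrix ι ι ℂ) (q Λ : ι → ℝ) :
    (Matrix.trace (V * Matrix.diagonal (fun j => (q j : ℂ)) * star V *
        Matrix.diagonal (fun i => (Λ i : ℂ)))).re
      = ∑ i, ∑ j, Complex.normSq (V i j) * (q j * Λ i) := by
  have hdiag : ∀ i, (V * Matrix.diagonal (fun j => (q j : ℂ)) * star V) i i
      = ∑ j, ((Complex.normSq (V i j) : ℂ) * (q j : ℂ)) := by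
    intro i
    rw [Matrix.mul_apply]
    refine Finset.sum_congr rfl fun j _ => ?_
    rw [Matrix.mul_diagonal, Matrix.star_apply]
    rw [show V i j * (q j : ℂ) * star (V i j) = V i j * star (V i j) * (q j : ℂ) by ring]
    rw [Complex.star_def, Complex.mul_conj]
  have : Matrix.trace (V * Matrix.diagonal (fun j => (q j : ℂ)) * star V *
      Matrix.diagonal (fun i => (Λ i : ℂ)))
      = ∑ i, ∑ j, ((Complex.normSq (V i j) * (q j * Λ i) : ℝ) : ℂ) := by
    rw [Matrix.trace]
    refine Finset.sum_congr rfl fun i _ => ?_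
    rw [Matrix.diag_apply, Matrix.mul_diagonal, hdiag, Finset.sum_mul]
    refine Finset.sum_congr rfl fun j _ => ?_
    push_cast
    ring
  rw [this]
  rw [Complex.re_sum]
  refine Finset.sum_congr rfl fun i _ => ?_
  rw [Complex.re_sum]
  refine Finset.sum_congr rfl fun j _ => ?_
  rw [Complex.ofReal_re]


lemma passive_aux (W : Matrix ι ι ℂ) (hW : W ∈ Matrix.unitaryGroup ι ℂ)
    (Λ : ι → ℝ) (β : ℝ) (hβ : 0 ≤ β) :
    IsPassive (W * Matrix.diagonal (fun i => (Λ i : ℂ)) * star W)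
      (W * Matrix.diagonal
        (fun i => (((∑ j, Real.exp (-(β * Λ j)))⁻¹ * Real.exp (-(β * Λ i)) : ℝ) : ℂ))
        * star W) := by
  set Z : ℝ := ∑ j, Real.exp (-(β * Λ j)) with hZ
  set q : ι → ℝ := fun i => Z⁻¹ * Real.exp (-(β * Λ i)) with hq
  set K := W * Matrix.diagonal (fun i => (Λ i : ℂ)) * star W with hK
  set σ := W * Matrix.diagonal (fun i => ((q i : ℝ) : ℂ)) * star W with hσ
  have cyc : ∀ A : Matrix ι ι ℂ, Matrix.trace (A * K)
      = Matrix.trace ((star W * A * W) * Matrix.diagonal (fun i => (Λ i : ℂ))) := by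
    intro A
    rw [hK, show A * (W * Matrix.diagonal (fun i => (Λ i : ℂ)) * star W)
      = (A * W) * Matrix.diagonal (fun i => (Λ i : ℂ)) * star W by
        simp only [Matrix.mul_assoc]]
    rw [Matrix.trace_mul_cycle]
    simp only [Matrix.mul_assoc]
  have main : ∀ X ∈ Matrix.unitaryGroup ι ℂ,
      energy K (X * σ * star X)
        = ∑ i, ∑ j, Complex.normSq ((star W * X * W) i j) * (q j * Λ i) := by
    intro X hX
    have hVs : star (star W * X * W) = star W * star X * W := by
      simp [Matrix.star_mul, star_star, Matrix.mul_assoc]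
    unfold energy
    rw [cyc]
    have hconj : star W * (X * σ * star X) * W
        = (star W * X * W) * Matrix.diagonal (fun i => ((q i : ℝ) : ℂ))
          * star (star W * X * W) := by
      rw [hσ, hVs]
      simp only [Matrix.mul_assoc]
    rw [hconj, Matrix.mul_assoc, ← Matrix.mul_assoc]
    exact re_trace_conj _ q Λ
  intro U hU
  set V := star W * U * W with hV
  have hVu : V ∈ Matrix.unitaryGroup ι ℂ := mul_mem (mul_mem (Unitary.star_mem hW) hU) hW
  have hVV : V * star V = 1 := (Matrix.mem_unitaryGroup_iff).mp hVu
  have hVV' : star V * V = 1 := (Matrix.mem_unitaryGroup_iff').mp hVu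
  have hrow : ∀ i, ∑ j, Complex.normSq (V i j) = 1 := by
    intro i
    have h : (V * star V) i i = 1 := by rw [hVV, Matrix.one_apply_eq]
    rw [Matrix.mul_apply] at h
    simp_rw [Matrix.star_apply, Complex.star_def, Complex.mul_conj] at h
    have := congrArg Complex.re h
    rw [Complex.re_sum] at this
    simpa using this
  have hcol : ∀ j, ∑ i, Complex.normSq (V i j) = 1 := by
    intro j
    have h : (star V * V) j j = 1 := by rw [hVV', Matrix.one_apply_eq]
    rw [Matrix.mul_apply] at h
    simp_rw [Matrix.star_apply, Complex.star_def, ← Complex.normSq_eq_conj_mul_self] at h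
    have := congrArg Complex.re h
    rw [Complex.re_sum] at this
    simpa using this
  have h1σ : energy K σ = energy K (1 * σ * star 1) := by
    rw [star_one, one_mul, mul_one]
  rw [h1σ, main 1 (one_mem _), main U hU]
  have hW1 : star W * (1 : Matrix ι ι ℂ) * W = 1 := by
    rw [mul_one, Matrix.mem_unitaryGroup_iff'.mp hW]
  rw [hW1]
  have hLHS : ∑ i, ∑ j, Complex.normSq ((1 : Matrix ι ι ℂ) i j) * (q j * Λ i)
      = ∑ i, q i * Λ i := by
    refine Finset.sum_congr rfl fun i _ => ?_
    simp_rw [Matrix.one_apply, apply_ite Complex.normSq, Complex.normSq_one,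
      Complex.normSq_zero, ite_mul, one_mul, zero_mul, Finset.sum_ite_eq]
    simp
  rw [hLHS]
  have hZinv : (0:ℝ) ≤ Z⁻¹ :=
    inv_nonneg.2 (Finset.sum_nonneg fun _ _ => (Real.exp_pos _).le)
  calc ∑ i, q i * Λ i = Z⁻¹ * ∑ i, Real.exp (-(β * Λ i)) * Λ i := by
        rw [Finset.mul_sum]
        exact Finset.sum_congr rfl fun i _ => by rw [hq]; ring
    _ ≤ Z⁻¹ * ∑ i, ∑ j, Complex.normSq (V i j) * (Real.exp (-(β * Λ j)) * Λ i) :=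
        mul_le_mul_of_nonneg_left
          (core_ineq (fun i j => Complex.normSq (V i j)) Λ β hβ
            (fun i j => Complex.normSq_nonneg _) hrow hcol) hZinv
    _ = ∑ i, ∑ j, Complex.normSq (V i j) * (q j * Λ i) := by
        rw [Finset.mul_sum]
        refine Finset.sum_congr rfl fun i _ => ?_
        rw [Finset.mul_sum]
        exact Finset.sum_congr rfl fun j _ => by rw [hq]; ring


section Tens

variable {d n : ℕ}

def tens (A : Fin n → Matrix (Fin d) (Fin d) ℂ) :
    Matrix (Fin n → Fin d) (Fin n → Fin d) ℂ :=
  Matrix.of fun i j => ∏ m, A m (i m) (j m)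

lemma tens_mul (A B : Fin n → Matrix (Fin d) (Fin d) ℂ) :
    tens A * tens B = tens (fun m => A m * B m) := by
  ext i j
  simp only [tens, Matrix.mul_apply, Matrix.of_apply]
  rw [Fintype.prod_sum fun m a => A m (i m) a * B m a (j m)]
  refine Finset.sum_congr rfl fun k _ => ?_
  rw [Finset.prod_mul_distrib]

lemma tens_diagonal (f : Fin n → Fin d → ℂ) :
    tens (fun m => Matrix.diagonal (f m))
      = Matrix.diagonal (fun i => ∏ m, f m (i m)) := by
  ext i j
  simp only [tens, Matrix.of_apply]
  by_cases h : i = j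
  · subst h
    simp [Matrix.diagonal_apply_eq]
  · rw [Matrix.diagonal_apply_ne _ h]
    obtain ⟨m, hm⟩ : ∃ m, i m ≠ j m := by
      by_contra hc
      push_neg at hc
      exact h (funext hc)
    exact Finset.prod_eq_zero (Finset.mem_univ m) (Matrix.diagonal_apply_ne _ hm)

lemma tens_one : tens (fun _ : Fin n => (1 : Matrix (Fin d) (Fin d) ℂ)) = 1 := by
  have : (fun _ : Fin n => (1 : Matrix (Fin d) (Fin d) ℂ))
      = fun _ => Matrix.diagonal (fun _ => (1:ℂ)) := by
    funext m; rw [Matrix.diagonal_one]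
  rw [this, tens_diagonal]
  simp [Matrix.diagonal_one]

lemma tens_star (A : Fin n → Matrix (Fin d) (Fin d) ℂ) :
    star (tens A) = tens (fun m => star (A m)) := by
  ext i j
  simp only [tens, Matrix.star_apply, Matrix.of_apply, star_prod]

lemma tens_mem_unitary (A : Fin n → Matrix (Fin d) (Fin d) ℂ)
    (h : ∀ m, A m ∈ Matrix.unitaryGroup (Fin d) ℂ) :
    tens A ∈ Matrix.unitaryGroup (Fin n → Fin d) ℂ := by
  rw [Matrix.mem_unitaryGroup_iff]
  rw [tens_star, tens_mul]
  have : (fun m => A m * star (A m)) = fun _ : Fin n => (1 : Matrix (Fin d) (Fin d) ℂ) := by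
    funext m
    exact Matrix.mem_unitaryGroup_iff.mp (h m)
  rw [this, tens_one]

end Tens

lemma diagonal_finsum {κ ι : Type*} [Fintype κ] [Fintype ι] [DecidableEq ι]
    (f : κ → ι → ℂ) :
    ∑ k, Matrix.diagonal (f k) = Matrix.diagonal (fun i => ∑ k, f k i) := by
  ext i j
  rw [Matrix.sum_apply]
  by_cases h : i = j
  · subst h
    simp [Matrix.diagonal_apply_eq]
  · simp [Matrix.diagonal_apply_ne _ h]

lemma exp_conj_unitary {ι : Type*} [Fintype ι] [DecidableEq ι]
    (V A : Matrix ι ι ℂ) (hV : V ∈ Matrix.unitaryGroup ι ℂ) :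
    NormedSpace.exp (V * A * star V) = V * NormedSpace.exp A * star V := by
  let U : (Matrix ι ι ℂ)ˣ :=
    ⟨V, star V, Matrix.mem_unitaryGroup_iff.mp hV, Matrix.mem_unitaryGroup_iff'.mp hV⟩
  exact Matrix.exp_units_conj U A

lemma sumHam_eq {d n : ℕ} (H : Matrix (Fin d) (Fin d) ℂ) :
    sumHam n H = ∑ m, tens (Function.update (fun _ : Fin n => (1 : Matrix (Fin d) (Fin d) ℂ)) m H) := by
  ext i j
  simp only [sumHam, Matrix.of_apply, Matrix.sum_apply, tens]
  refine Finset.sum_congr rfl fun m _ => ?_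
  rw [← Finset.mul_prod_erase Finset.univ
    (fun l => Function.update (fun _ : Fin n => (1 : Matrix (Fin d) (Fin d) ℂ)) m H l (i l) (j l))
    (Finset.mem_univ m)]
  rw [Function.update_self]
  congr 1
  refine Finset.prod_congr rfl fun l hl => ?_
  rw [Function.update_of_ne (Finset.ne_of_mem_erase hl)]
  simp [Matrix.one_apply]

end GibbsAux

theorem gibbs_completely_passive {d : ℕ} (H : Matrix (Fin d) (Fin d) ℂ)
    (hH : H.IsHermitian) (β : ℝ) (hβ : 0 ≤ β) :
    ∀ n : ℕ, 1 ≤ n → IsPassive (sumHam n H) (tensPow n (gibbs H β)) := by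
  intro n _
  obtain ⟨V, hVu, lam, hspec⟩ :
      ∃ V ∈ Matrix.unitaryGroup (Fin d) ℂ, ∃ lam : Fin d → ℝ,
        H = V * Matrix.diagonal (fun x => (lam x : ℂ)) * star V :=
    ⟨_, hH.eigenvectorUnitary.2, hH.eigenvalues, hH.spectral_theorem⟩
  set Λ : (Fin n → Fin d) → ℝ := fun i => ∑ m, lam (i m) with hΛ
  set W : Matrix (Fin n → Fin d) (Fin n → Fin d) ℂ := GibbsAux.tens (fun _ : Fin n => V)
    with hW
  have hWu : W ∈ Matrix.unitaryGroup (Fin n → Fin d) ℂ :=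
    GibbsAux.tens_mem_unitary _ (fun _ => hVu)
  have hWstar : star W = GibbsAux.tens (fun _ : Fin n => star V) := by
    rw [hW, GibbsAux.tens_star]
  have hVV : V * star V = 1 := Matrix.mem_unitaryGroup_iff.mp hVu
  set Z : ℝ := ∑ x, Real.exp (-(β * lam x)) with hZ
  set ZΛ : ℝ := ∑ i, Real.exp (-(β * Λ i)) with hZΛ
  -- 1. sumHam n H = W * diagonal Λ * star W
  have hsum : sumHam n H = W * Matrix.diagonal (fun i => (Λ i : ℂ)) * star W := by
    rw [GibbsAux.sumHam_eq]
    have hterm : ∀ m : Fin n,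
        GibbsAux.tens (Function.update (fun _ : Fin n => (1 : Matrix (Fin d) (Fin d) ℂ)) m H)
          = W * Matrix.diagonal (fun i => (lam (i m) : ℂ)) * star W := by
      intro m
      have h1 : Function.update (fun _ : Fin n => (1 : Matrix (Fin d) (Fin d) ℂ)) m H
          = fun l => V * Matrix.diagonal (fun x => if l = m then (lam x : ℂ) else 1) * star V := by
        funext l
        by_cases hl : l = m
        · subst hl
          rw [Function.update_self]
          simp only [if_pos rfl]
          exact hspec
        · rw [Function.update_of_ne hl]
          simp only [if_neg hl]
          rw [Matrix.diagonal_one, mul_one, hVV]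
      rw [h1]
      have h2 : W * GibbsAux.tens
            (fun l => Matrix.diagonal (fun x => if l = m then (lam x : ℂ) else 1))
          * GibbsAux.tens (fun _ : Fin n => star V)
          = GibbsAux.tens
            (fun l => V * Matrix.diagonal (fun x => if l = m then (lam x : ℂ) else 1) * star V) := by
        rw [hW, GibbsAux.tens_mul, GibbsAux.tens_mul]
      rw [← h2, hWstar]
      congr 1
      congr 1
      rw [GibbsAux.tens_diagonal]
      have hii : (fun i : Fin n → Fin d => ∏ l : Fin n, if l = m then ((lam (i l) : ℝ) : ℂ) else 1)
          = fun i => ((lam (i m) : ℝ) : ℂ) := by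
        funext i
        exact Fintype.prod_ite_eq' m fun l => ((lam (i l) : ℝ) : ℂ)
      rw [hii]
    rw [Finset.sum_congr rfl fun m _ => hterm m]
    rw [← Finset.sum_mul, ← Matrix.mul_sum, GibbsAux.diagonal_finsum]
    congr 2
    funext i
    rw [hΛ]
    push_cast
    rfl
  -- 2. exp of -β H
  have hexpH : NormedSpace.exp ((-β : ℂ) • H)
      = V * Matrix.diagonal (fun x => ((Real.exp (-(β * lam x)) : ℝ) : ℂ)) * star V := by
    have hsmul : (-β : ℂ) • H
        = V * Matrix.diagonal (fun x => ((-(β * lam x) : ℝ) : ℂ)) * star V := by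
      rw [hspec, ← Matrix.smul_mul, ← Matrix.mul_smul, ← Matrix.diagonal_smul]
      have hfun1 : ((-β : ℂ) • fun x => ((lam x : ℝ) : ℂ))
          = fun x => ((-(β * lam x) : ℝ) : ℂ) := by
        funext x
        simp only [Pi.smul_apply, smul_eq_mul]
        push_cast
        ring
      rw [hfun1]
    rw [hsmul, GibbsAux.exp_conj_unitary _ _ hVu, Matrix.exp_diagonal]
    have hfun2 : NormedSpace.exp (fun x => ((-(β * lam x) : ℝ) : ℂ))
        = fun x => ((Real.exp (-(β * lam x)) : ℝ) : ℂ) := by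
      rw [Pi.exp_def]
      funext x
      rw [← Complex.exp_eq_exp_ℂ, ← Complex.ofReal_exp]
    rw [hfun2]
  -- 3. trace of exp
  have htr : Matrix.trace (NormedSpace.exp ((-β : ℂ) • H)) = ((Z : ℝ) : ℂ) := by
    rw [hexpH, Matrix.trace_mul_cycle, Matrix.mem_unitaryGroup_iff'.mp hVu, one_mul,
      Matrix.trace_diagonal, hZ]
    push_cast
    rfl
  -- 4. gibbs as conjugated diagonal
  have hgibbs : gibbs H β
      = V * Matrix.diagonal (fun x => ((Z⁻¹ * Real.exp (-(β * lam x)) : ℝ) : ℂ)) * star V := by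
    rw [gibbs, htr, hexpH, ← Matrix.smul_mul, ← Matrix.mul_smul, ← Matrix.diagonal_smul]
    have hfun : ((Z : ℂ)⁻¹ • fun x => ((Real.exp (-(β * lam x)) : ℝ) : ℂ))
        = fun x => ((Z⁻¹ * Real.exp (-(β * lam x)) : ℝ) : ℂ) := by
      funext x
      simp only [Pi.smul_apply, smul_eq_mul]
      push_cast
      ring
    rw [hfun]
  -- 5. Z ^ n = ZΛ
  have hZpow : Z ^ n = ZΛ := by
    rw [hZΛ]
    calc Z ^ n = ∏ _m : Fin n, Z := by rw [Finset.prod_const]; simp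
      _ = ∑ i : Fin n → Fin d, ∏ m : Fin n, Real.exp (-(β * lam (i m))) := by
          rw [hZ]
          exact Fintype.prod_sum fun _ x => Real.exp (-(β * lam x))
      _ = ∑ i : Fin n → Fin d, Real.exp (-(β * Λ i)) := by
          refine Finset.sum_congr rfl fun i _ => ?_
          rw [← Real.exp_sum]
          congr 1
          simp [hΛ, Finset.mul_sum]
  -- 6. tensPow of gibbs
  have htens : tensPow n (gibbs H β)
      = W * Matrix.diagonal (fun i => ((ZΛ⁻¹ * Real.exp (-(β * Λ i)) : ℝ) : ℂ)) * star W := by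
    rw [hgibbs]
    have h0 : tensPow n
        (V * Matrix.diagonal (fun x => ((Z⁻¹ * Real.exp (-(β * lam x)) : ℝ) : ℂ)) * star V)
        = GibbsAux.tens (fun _ : Fin n =>
            V * Matrix.diagonal (fun x => ((Z⁻¹ * Real.exp (-(β * lam x)) : ℝ) : ℂ)) * star V) :=
      rfl
    rw [h0]
    have h2 : W * GibbsAux.tens (fun _ : Fin n =>
          Matrix.diagonal (fun x => ((Z⁻¹ * Real.exp (-(β * lam x)) : ℝ) : ℂ)))
        * GibbsAux.tens (fun _ : Fin n => star V)
        = GibbsAux.tens (fun _ : Fin n =>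
            V * Matrix.diagonal (fun x => ((Z⁻¹ * Real.exp (-(β * lam x)) : ℝ) : ℂ)) * star V) := by
      rw [hW, GibbsAux.tens_mul, GibbsAux.tens_mul]
    rw [← h2, hWstar]
    congr 1
    congr 1
    rw [GibbsAux.tens_diagonal]
    have hent : (fun i : Fin n → Fin d =>
          ∏ m : Fin n, ((Z⁻¹ * Real.exp (-(β * lam (i m))) : ℝ) : ℂ))
        = fun i => ((ZΛ⁻¹ * Real.exp (-(β * Λ i)) : ℝ) : ℂ) := by
      funext i
      rw [← Complex.ofReal_prod]
      congr 1
      rw [Finset.prod_mul_distrib, Finset.prod_const, ← Real.exp_sum]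
      have hsum' : ∑ m : Fin n, -(β * lam (i m)) = -(β * Λ i) := by
        simp [hΛ, Finset.mul_sum]
      rw [hsum']
      have hcard : (Finset.univ : Finset (Fin n)).card = n := by simp
      rw [hcard, inv_pow, hZpow]
    rw [hent]
  -- conclude
  rw [hsum, htens]
  exact GibbsAux.passive_aux W hWu Λ β hβ
end
end

section
/- Converse (Pusz–Woronowicz–Lenard): if a faithful state σ on ℂ^d is completely passive with respect to H (i.e., ⊗^n σ is passive with respect to H^(n) for all n), and H has at least two distinct eigenvalues, then σ = exp(−βH)/tr(exp(−βH)) for some β ≥ 0. -/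
open Matrix BigOperators
open scoped Classical ComplexOrder

noncomputable section

open NormedSpace

def mprod {d n : ℕ} (g : Fin n → Matrix (Fin d) (Fin d) ℂ) :
    Matrix (Fin n → Fin d) (Fin n → Fin d) ℂ :=
  Matrix.of fun i j => ∏ m, g m (i m) (j m)

lemma mprod_mul {d n : ℕ} (g h : Fin n → Matrix (Fin d) (Fin d) ℂ) :
    mprod g * mprod h = mprod (fun m => g m * h m) := by
  ext i j
  simp only [mprod, Matrix.mul_apply, Matrix.of_apply]
  have key := Finset.prod_univ_sum (κ := fun _ : Fin n => Fin d)
    (t := fun _ : Fin n => (Finset.univ : Finset (Fin d)))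
    (f := fun m x => g m (i m) x * h m x (j m))
  rw [Fintype.piFinset_univ] at key
  rw [key]
  refine Finset.sum_congr rfl (fun k _ => ?_)
  rw [← Finset.prod_mul_distrib]

lemma mprod_one {d n : ℕ} : mprod (fun _ : Fin n => (1 : Matrix (Fin d) (Fin d) ℂ)) = 1 := by
  ext i j
  simp only [mprod, Matrix.of_apply, Matrix.one_apply]
  by_cases h : i = j
  · subst h; simp
  · rw [if_neg h]
    obtain ⟨m, hm⟩ : ∃ m, i m ≠ j m := by
      by_contra hc; push_neg at hc; exact h (funext hc)
    exact Finset.prod_eq_zero (Finset.mem_univ m) (by simp [Matrix.one_apply, hm])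

lemma tensPow_eq_mprod {d n : ℕ} (ρ : Matrix (Fin d) (Fin d) ℂ) :
    tensPow n ρ = mprod (fun _ => ρ) := rfl

lemma tensPow_mul {d n : ℕ} (A B : Matrix (Fin d) (Fin d) ℂ) :
    tensPow n (A * B) = tensPow n A * tensPow n B := by
  simp [tensPow_eq_mprod, mprod_mul]

lemma tensPow_one {d n : ℕ} : tensPow n (1 : Matrix (Fin d) (Fin d) ℂ) = 1 := by
  simp [tensPow_eq_mprod, mprod_one]

lemma tensPow_star {d n : ℕ} (A : Matrix (Fin d) (Fin d) ℂ) :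
    tensPow n (star A) = star (tensPow n A) := by
  ext i j
  simp only [tensPow, Matrix.of_apply, Matrix.star_apply, Matrix.conjTranspose_apply]
  rw [star_prod]

lemma tensPow_mem_unitary {d n : ℕ} (W : Matrix (Fin d) (Fin d) ℂ)
    (hW : W ∈ Matrix.unitaryGroup (Fin d) ℂ) :
    tensPow n W ∈ Matrix.unitaryGroup (Fin n → Fin d) ℂ := by
  constructor
  · rw [← tensPow_star, ← tensPow_mul, (by exact hW.1 : star W * W = 1), tensPow_one]
  · rw [← tensPow_star, ← tensPow_mul, (by exact hW.2 : W * star W = 1), tensPow_one]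

/-- `sumHam` as a sum of `mprod`s with an `ite` matrix insertion. -/
lemma sumHam_eq {d n : ℕ} (H : Matrix (Fin d) (Fin d) ℂ) :
    sumHam n H = ∑ m, mprod (fun l => if l = m then H else 1) := by
  ext i j
  simp only [sumHam, Matrix.of_apply, Matrix.sum_apply, mprod]
  congr 1
  ext m
  rw [Finset.prod_eq_mul_prod_sdiff_singleton_of_mem (Finset.mem_univ m)
    (fun l => (if l = m then H else 1) (i l) (j l))]
  simp only [if_pos rfl]
  congr 1
  rw [Finset.erase_eq]
  refine Finset.prod_congr rfl (fun l hl => ?_)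
  have hlm : l ≠ m := by
    simp only [Finset.mem_sdiff, Finset.mem_singleton] at hl
    exact hl.2
  rw [if_neg hlm, Matrix.one_apply]

lemma sumHam_conj {d n : ℕ} (A B H : Matrix (Fin d) (Fin d) ℂ) (hAB : A * B = 1) :
    tensPow n A * sumHam n H * tensPow n B = sumHam n (A * H * B) := by
  rw [sumHam_eq, sumHam_eq, Finset.mul_sum, Finset.sum_mul]
  congr 1
  ext m
  rw [tensPow_eq_mprod, tensPow_eq_mprod, mprod_mul, mprod_mul]
  congr 1
  ext l
  by_cases h : l = m <;> simp [h, hAB]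

lemma tensPow_diagonal {d n : ℕ} (v : Fin d → ℂ) :
    tensPow n (Matrix.diagonal v) = Matrix.diagonal (fun a : Fin n → Fin d => ∏ m, v (a m)) := by
  ext i j
  simp only [tensPow, Matrix.of_apply, Matrix.diagonal_apply]
  by_cases h : i = j
  · subst h; simp
  · rw [if_neg h]
    obtain ⟨m, hm⟩ : ∃ m, i m ≠ j m := by
      by_contra hc; push_neg at hc; exact h (funext hc)
    exact Finset.prod_eq_zero (Finset.mem_univ m) (by simp [hm])

lemma sumHam_diagonal {d n : ℕ} (v : Fin d → ℂ) :
    sumHam n (Matrix.diagonal v) = Matrix.diagonal (fun a : Fin n → Fin d => ∑ m, v (a m)) := by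
  ext i j
  simp only [sumHam, Matrix.of_apply, Matrix.diagonal_apply]
  by_cases h : i = j
  · subst h; simp
  · rw [if_neg h]
    obtain ⟨m, hm⟩ : ∃ m, i m ≠ j m := by
      by_contra hc; push_neg at hc; exact h (funext hc)
    refine Finset.sum_eq_zero (fun k _ => ?_)
    by_cases hk : k = m
    · subst hk; simp [Matrix.diagonal_apply, hm]
    · refine mul_eq_zero_of_right _ ?_
      exact Finset.prod_eq_zero (Finset.mem_erase.mpr ⟨Ne.symm hk, Finset.mem_univ m⟩) (by simp [hm])

lemma passive_commute {ι : Type*} [Fintype ι] [DecidableEq ι] {H σ : Matrix ι ι ℂ}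
    (hH : H.IsHermitian) (hσ : σ.IsHermitian) (hp : IsPassive H σ) :
    σ * H = H * σ := by
  letI : NormedRing (Matrix ι ι ℂ) := Matrix.linftyOpNormedRing
  letI : NormedAlgebra ℝ (Matrix ι ι ℂ) := Matrix.linftyOpNormedAlgebra
  letI : CompleteSpace (Matrix ι ι ℂ) := FiniteDimensional.complete ℝ _
  set C : Matrix ι ι ℂ := σ * H - H * σ with hCdef
  have hCstar : star C = -C := by
    show (σ * H - H * σ)ᴴ = -(σ * H - H * σ)
    rw [conjTranspose_sub, conjTranspose_mul, conjTranspose_mul, hH.eq, hσ.eq]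
    exact (neg_sub _ _).symm
  -- the path of unitaries
  set F : ℝ → Matrix ι ι ℂ := fun t => exp (t • C) with hFdef
  have hstarF : ∀ t : ℝ, star (F t) = exp (t • (-C)) := by
    intro t
    show (exp (t • C))ᴴ = _
    rw [← Matrix.exp_conjTranspose]
    congr 1
    rw [conjTranspose_smul]
    show t • star C = _
    rw [hCstar]
  have hFunit : ∀ t : ℝ, F t ∈ Matrix.unitaryGroup ι ℂ := by
    intro t
    have hcomm : Commute (t • C) (t • (-C)) := by
      apply Commute.smul_left; apply Commute.smul_right
      simp [Commute, SemiconjBy, mul_neg, neg_mul]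
    constructor
    · rw [hstarF]
      rw [← Matrix.exp_add_of_commute _ _ hcomm.symm]
      simp
    · rw [hstarF]
      rw [← Matrix.exp_add_of_commute _ _ hcomm]
      simp
  have hF0 : F 0 = 1 := by simp [hFdef, NormedSpace.exp_zero]
  -- derivative of F
  have hFderiv : HasDerivAt F C 0 := by
    have := hasDerivAt_exp_smul_const (𝕂 := ℝ) C (0 : ℝ)
    simp only [zero_smul, exp_zero, one_mul] at this
    exact this
  have hFstarderiv : HasDerivAt (fun t => star (F t)) (-C) 0 := by
    have := hasDerivAt_exp_smul_const (𝕂 := ℝ) (-C) (0 : ℝ)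
    simp only [zero_smul, exp_zero, one_mul] at this
    exact HasDerivAt.congr_of_eventuallyEq this
      (Filter.Eventually.of_forall fun t => (hstarF t))
  -- the path of conjugated states
  have hpath : HasDerivAt (fun t => F t * σ * star (F t)) (C * σ - σ * C) 0 := by
    have h1 : HasDerivAt (fun t => F t * σ) (C * σ) 0 := by
      exact hFderiv.mul_const σ
    have h2 := h1.mul hFstarderiv
    simp only [hF0, one_mul] at h2
    rw [show C * σ - σ * C = C * σ * star (1 : Matrix ι ι ℂ) + σ * -C by
      simp only [star_one]
      noncomm_ring]
    exact h2
  -- the energy functional as a continuous linear map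
  let L : Matrix ι ι ℂ →ₗ[ℝ] ℝ :=
    { toFun := fun M => (Matrix.trace (M * H)).re
      map_add' := by intro M N; simp [add_mul]
      map_smul' := by intro t M; simp [smul_mul_assoc, Matrix.trace_smul] }
  let Lc : Matrix ι ι ℂ →L[ℝ] ℝ := LinearMap.toContinuousLinearMap L
  have hg : HasDerivAt (fun t => energy H (F t * σ * star (F t)))
      (Matrix.trace ((C * σ - σ * C) * H)).re 0 := by
    have := Lc.hasFDerivAt.comp_hasDerivAt 0 hpath
    exact this
  -- g has a global minimum at 0
  have hmin : IsLocalMin (fun t => energy H (F t * σ * star (F t))) 0 := by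
    apply Filter.Eventually.of_forall
    intro t
    have := hp (F t) (hFunit t)
    simpa [hF0] using this
  have hder0 : (Matrix.trace ((C * σ - σ * C) * H)).re = 0 := hmin.hasDerivAt_eq_zero hg
  -- compute the trace
  have htr : Matrix.trace ((C * σ - σ * C) * H) = Matrix.trace (C * C) := by
    rw [sub_mul, Matrix.trace_sub]
    rw [mul_assoc, mul_assoc]
    rw [Matrix.trace_mul_comm σ (C * H)]
    have hx : C * (σ * H) - C * H * σ = C * C := by rw [hCdef]; noncomm_ring
    rw [← Matrix.trace_sub, hx]
  have htr2 : Matrix.trace (C * C) = -Matrix.trace (C * star C) := by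
    rw [hCstar]; simp [Matrix.mul_neg]
  have hCC : (Matrix.trace (C * star C)).re = ∑ i, ∑ j, Complex.normSq (C i j) := by
    simp only [Matrix.trace, Matrix.diag, Matrix.mul_apply, Matrix.star_apply,
      Matrix.conjTranspose_apply]
    rw [Complex.re_sum]
    refine Finset.sum_congr rfl (fun i _ => ?_)
    rw [Complex.re_sum]
    refine Finset.sum_congr rfl (fun j _ => ?_)
    rw [show star (C i j) = (starRingEnd ℂ) (C i j) from rfl, Complex.mul_conj]
    simp
  have hzero : ∑ i, ∑ j, Complex.normSq (C i j) = 0 := by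
    have : (Matrix.trace (C * C)).re = 0 := by rw [← htr]; exact hder0
    rw [htr2] at this
    simp only [Complex.neg_re, neg_eq_zero] at this
    rw [hCC] at this
    exact this
  have hCzero : C = 0 := by
    ext i j
    have h1 : ∀ i ∈ Finset.univ, (0:ℝ) ≤ ∑ j, Complex.normSq (C i j) :=
      fun i _ => Finset.sum_nonneg fun j _ => Complex.normSq_nonneg _
    have h2 := (Finset.sum_eq_zero_iff_of_nonneg h1).mp hzero i (Finset.mem_univ i)
    have h3 : ∀ j ∈ Finset.univ, (0:ℝ) ≤ Complex.normSq (C i j) :=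
      fun j _ => Complex.normSq_nonneg _
    have h4 := (Finset.sum_eq_zero_iff_of_nonneg h3).mp h2 j (Finset.mem_univ j)
    simpa using Complex.normSq_eq_zero.mp h4
  have := sub_eq_zero.mp hCzero
  exact this

lemma sum_level {ι : Type*} [Fintype ι] (e : ι → ℝ) (r : ℝ) (f : {k // e k = r} → ℂ)
    (g : ι → ℂ) (hg : ∀ k, g k = if h : e k = r then f ⟨k, h⟩ else 0) :
    ∑ k, g k = ∑ k : {k // e k = r}, f k := by
  classical
  have h1 : ∑ k ∈ Finset.univ.filter (fun k => e k = r), g k = ∑ k, g k := by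
    apply Finset.sum_subset (Finset.filter_subset _ _)
    intro x _ hx
    simp only [Finset.mem_filter, Finset.mem_univ, true_and] at hx
    rw [hg x, dif_neg hx]
  rw [← h1]
  rw [Finset.sum_subtype (p := fun k => e k = r) (Finset.univ.filter (fun k => e k = r)) (fun x => by simp) g]
  refine Finset.sum_congr rfl (fun x _ => ?_)
  rw [hg x.1, dif_pos x.2]

lemma block_diagonalize {ι : Type*} [Fintype ι] [DecidableEq ι] (e : ι → ℝ)
    (τ : Matrix ι ι ℂ) (hτ : τ.IsHermitian) (hblock : ∀ i j, e i ≠ e j → τ i j = 0) :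
    ∃ V ∈ Matrix.unitaryGroup ι ℂ,
      (Matrix.diagonal (fun i => (e i : ℂ)) * V = V * Matrix.diagonal (fun i => (e i : ℂ))) ∧
      ∃ q : ι → ℝ, star V * τ * V = Matrix.diagonal (fun i => (q i : ℂ)) := by
  classical
  set τs : ∀ r : ℝ, Matrix {k // e k = r} {k // e k = r} ℂ :=
    fun r => Matrix.of (fun a b => τ a.1 b.1) with hτsdef
  have hτs : ∀ r, (τs r).IsHermitian := by
    intro r
    show (τs r)ᴴ = τs r
    ext a b
    show star (τ b.1 a.1) = τ a.1 b.1
    exact congrFun (congrFun hτ a.1) b.1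
  set W : ∀ r : ℝ, Matrix {k // e k = r} {k // e k = r} ℂ :=
    fun r => ((hτs r).eigenvectorUnitary : Matrix _ _ ℂ) with hWdef
  have hWstar : ∀ r, star (W r) * W r = 1 :=
    fun r => Matrix.UnitaryGroup.star_mul_self _
  have hWspec : ∀ r, τs r * W r
      = W r * Matrix.diagonal (fun a => ((hτs r).eigenvalues a : ℂ)) := by
    intro r
    conv_lhs => rw [(hτs r).spectral_theorem, Unitary.conjStarAlgAut_apply]
    simp only [mul_assoc]
    rw [hWstar r, mul_one]
    rfl
  set q : ι → ℝ := fun i => (hτs (e i)).eigenvalues ⟨i, rfl⟩ with hqdef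
  have heig : ∀ (r : ℝ) (j : ι) (hj : e j = r), (hτs r).eigenvalues ⟨j, hj⟩ = q j := by
    intro r j hj; subst hj; rfl
  set V : Matrix ι ι ℂ :=
    Matrix.of (fun a b => if h : e b = e a then W (e a) ⟨a, rfl⟩ ⟨b, h⟩ else 0) with hVdef
  have Vspec : ∀ (r : ℝ) (a b : ι) (ha : e a = r) (hb : e b = r),
      V a b = W r ⟨a, ha⟩ ⟨b, hb⟩ := by
    intro r a b ha hb
    subst ha
    show dite _ _ _ = _
    rw [dif_pos hb]
  have Vzero : ∀ a b : ι, e b ≠ e a → V a b = 0 := by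
    intro a b h; show dite _ _ _ = _; rw [dif_neg h]
  have hVV : star V * V = 1 := by
    ext i j
    rw [Matrix.mul_apply]
    by_cases hij : e i = e j
    · rw [sum_level e (e j)
          (fun k => star (W (e j) k ⟨i, hij⟩) * W (e j) k ⟨j, rfl⟩)
          (fun k => star V i k * V k j)
          (by
            intro k
            by_cases hk : e k = e j
            · rw [dif_pos hk]
              rw [Matrix.star_apply, Vspec (e j) k i hk hij, Vspec (e j) k j hk rfl]
            · rw [dif_neg hk]
              rw [Vzero k j (fun h => hk h.symm), mul_zero])]
      have h2 : ∑ k : {k // e k = e j}, star (W (e j) k ⟨i, hij⟩) * W (e j) k ⟨j, rfl⟩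
          = (star (W (e j)) * W (e j)) ⟨i, hij⟩ ⟨j, rfl⟩ := by
        rw [Matrix.mul_apply]
        exact Finset.sum_congr rfl (fun k _ => by rw [Matrix.star_apply])
      rw [h2, hWstar (e j)]
      by_cases h : i = j
      · subst h; simp
      · rw [Matrix.one_apply_ne (fun hc => h (congrArg Subtype.val hc)),
          Matrix.one_apply_ne h]
    · rw [Finset.sum_eq_zero (fun k _ => ?_), Matrix.one_apply_ne (fun h => hij (congrArg e h))]
      by_cases hk : e k = e i
      · rw [Vzero k j (fun h => hij (hk.symm.trans h.symm)), mul_zero]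
      · rw [Matrix.star_apply, Vzero k i (fun h => hk h.symm), star_zero, zero_mul]
  have hVmem : V ∈ Matrix.unitaryGroup ι ℂ := by
    rw [Matrix.mem_unitaryGroup_iff']
    exact hVV
  have hEV : Matrix.diagonal (fun i => (e i : ℂ)) * V
      = V * Matrix.diagonal (fun i => (e i : ℂ)) := by
    ext i j
    rw [Matrix.diagonal_mul, Matrix.mul_diagonal]
    by_cases hij : e i = e j
    · rw [hij, mul_comm]
    · rw [Vzero i j (fun h => hij h.symm), mul_zero, zero_mul]
  have hτV : τ * V = V * Matrix.diagonal (fun i => (q i : ℂ)) := by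
    ext i j
    rw [Matrix.mul_apply, Matrix.mul_diagonal]
    by_cases hij : e i = e j
    · rw [sum_level e (e j)
          (fun k => τs (e j) ⟨i, hij⟩ k * W (e j) k ⟨j, rfl⟩)
          (fun k => τ i k * V k j)
          (by
            intro k
            by_cases hk : e k = e j
            · rw [dif_pos hk, Vspec (e j) k j hk rfl]
              rfl
            · rw [dif_neg hk, Vzero k j (fun h => hk h.symm), mul_zero])]
      have h2 : ∑ k : {k // e k = e j}, τs (e j) ⟨i, hij⟩ k * W (e j) k ⟨j, rfl⟩
          = (τs (e j) * W (e j)) ⟨i, hij⟩ ⟨j, rfl⟩ := (Matrix.mul_apply).symm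
      rw [h2, hWspec (e j), Matrix.mul_diagonal, Vspec (e j) i j hij rfl, heig (e j) j rfl]
    · rw [Finset.sum_eq_zero (fun k _ => ?_), Vzero i j (fun h => hij h.symm), zero_mul]
      by_cases hk : e k = e j
      · rw [hblock i k (fun h => hij (h.trans hk)), zero_mul]
      · rw [Vzero k j (fun h => hk h.symm), mul_zero]
  refine ⟨V, hVmem, hEV, q, ?_⟩
  rw [mul_assoc, hτV, ← mul_assoc, hVV, one_mul]

lemma lenard {d : ℕ} (e : Fin d → ℝ) (x : Fin d → ℝ)
    (i0 j0 : Fin d) (h0 : e i0 < e j0)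
    (K2 : ∀ (m n : ℕ) (i j k l : Fin d), 1 ≤ m + n →
      (m : ℝ) * e i + n * e k < (m : ℝ) * e j + n * e l →
      (m : ℝ) * x j + n * x l ≤ (m : ℝ) * x i + n * x k) :
    ∃ β : ℝ, 0 ≤ β ∧ ∀ i j, x i - x j = β * (e j - e i) := by
  have hΔ0 : (0:ℝ) < e j0 - e i0 := by linarith
  set β : ℝ := (x i0 - x j0) / (e j0 - e i0) with hβdef
  have hB : 0 ≤ x i0 - x j0 := by
    have := K2 1 0 i0 j0 i0 i0 (by norm_num) (by push_cast; linarith)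
    push_cast at this; linarith
  have hβ : 0 ≤ β := div_nonneg hB hΔ0.le
  have hβmul : x i0 - x j0 = β * (e j0 - e i0) := by
    rw [hβdef, div_mul_cancel₀ _ hΔ0.ne']
  refine ⟨β, hβ, ?_⟩
  -- the case of equal energies
  have eqcase : ∀ i j, e i = e j → x j ≤ x i := by
    intro i j hij
    by_contra hc
    push_neg at hc
    obtain ⟨m, hm⟩ := exists_nat_gt ((x i0 - x j0) / (x j - x i))
    have hxji : 0 < x j - x i := by linarith
    have h1 := K2 m 1 i j i0 j0 (by omega) (by push_cast; rw [hij]; linarith)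
    push_cast at h1
    have h2 : (m:ℝ) * (x j - x i) ≤ x i0 - x j0 := by linarith
    have h3 : (x i0 - x j0) / (x j - x i) < m := hm
    have h4 : x i0 - x j0 < m * (x j - x i) := by
      rw [div_lt_iff₀ hxji] at h3; linarith
    linarith
  -- the case of strictly increasing energies
  have step : ∀ i j, e i < e j → x i - x j = β * (e j - e i) := by
    intro i j hij
    have hΔ : (0:ℝ) < e j - e i := by linarith
    -- upper bound : x i - x j ≤ β * (e j - e i)
    have upper : x i - x j ≤ β * (e j - e i) := by
      by_contra hc
      push_neg at hc
      have himp : ∀ m n : ℕ, 1 ≤ m + n → (m:ℝ) * (e j - e i) < n * (e j0 - e i0) →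
          (m:ℝ) * (x i - x j) ≤ n * (x i0 - x j0) := by
        intro m n hmn hlt
        have := K2 m n j i i0 j0 hmn (by push_cast; linarith)
        push_cast at this; linarith
      rcases eq_or_lt_of_le hβ with hβ0 | hβpos
      · -- β = 0
        have hX : 0 < x i - x j := by
          have := hc; rw [← hβ0] at this; linarith
        have hB0 : x i0 - x j0 = 0 := by
          rw [hβmul, ← hβ0]; ring
        obtain ⟨n, hn⟩ := exists_nat_gt ((e j - e i) / (e j0 - e i0))
        have h1 := himp 1 n (by omega) (by
          have : (e j - e i) < n * (e j0 - e i0) := by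
            rw [div_lt_iff₀ hΔ0] at hn; linarith
          push_cast; linarith)
        rw [hB0] at h1
        push_cast at h1
        linarith
      · -- β > 0
        have hd : (0:ℝ) < β * (e j0 - e i0) := mul_pos hβpos hΔ0
        have hfrac : (e j - e i) / (e j0 - e i0) < (x i - x j) / (β * (e j0 - e i0)) := by
          rw [div_lt_div_iff₀ hΔ0 hd]
          have : β * (e j - e i) < x i - x j := hc
          nlinarith
        obtain ⟨r, hr1, hr2⟩ := exists_rat_btwn hfrac
        have hrpos : (0:ℝ) < r := lt_trans (by positivity) hr1
        have hnum : 0 < r.num := Rat.num_pos.mpr (by exact_mod_cast hrpos)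
        set m : ℕ := r.den with hm
        set n : ℕ := r.num.toNat with hn
        have hmpos : 0 < m := r.pos
        have hmRpos : (0:ℝ) < (m:ℝ) := by exact_mod_cast hmpos
        have hcast : (r : ℝ) = (n : ℝ) / (m : ℝ) := by
          rw [Rat.cast_def, hn, hm]
          congr 1
          exact_mod_cast (Int.toNat_of_nonneg hnum.le).symm
        rw [hcast, div_lt_div_iff₀ hΔ0 hmRpos] at hr1
        rw [hcast, div_lt_div_iff₀ hmRpos hd] at hr2
        have hcond : (m:ℝ) * (e j - e i) < n * (e j0 - e i0) := by linarith
        have hconc := himp m n (by omega) hcond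
        have hgt : (n:ℝ) * (x i0 - x j0) < m * (x i - x j) := by
          rw [hβmul]; linarith
        linarith
    -- lower bound
    have lower : β * (e j - e i) ≤ x i - x j := by
      by_contra hc
      push_neg at hc
      have himp : ∀ m n : ℕ, 1 ≤ m + n → (n:ℝ) * (e j0 - e i0) < m * (e j - e i) →
          (n:ℝ) * (x i0 - x j0) ≤ m * (x i - x j) := by
        intro m n hmn hlt
        have := K2 m n i j j0 i0 hmn (by push_cast; linarith)
        push_cast at this; linarith
      have hX0 : 0 ≤ x i - x j := by
        have h1 := himp 1 0 (by omega) (by push_cast; linarith)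
        push_cast at h1; linarith
      rcases eq_or_lt_of_le hβ with hβ0 | hβpos
      · have : β * (e j - e i) ≤ 0 := by rw [← hβ0]; simp
        linarith
      · have hd : (0:ℝ) < β * (e j0 - e i0) := mul_pos hβpos hΔ0
        have hfrac : (x i - x j) / (β * (e j0 - e i0)) < (e j - e i) / (e j0 - e i0) := by
          rw [div_lt_div_iff₀ hd hΔ0]
          nlinarith [hc]
        obtain ⟨r, hr1, hr2⟩ := exists_rat_btwn hfrac
        have hrpos : (0:ℝ) < r := lt_of_le_of_lt (by positivity) hr1
        have hnum : 0 < r.num := Rat.num_pos.mpr (by exact_mod_cast hrpos)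
        set m : ℕ := r.den with hm
        set n : ℕ := r.num.toNat with hn
        have hmpos : 0 < m := r.pos
        have hmRpos : (0:ℝ) < (m:ℝ) := by exact_mod_cast hmpos
        have hcast : (r : ℝ) = (n : ℝ) / (m : ℝ) := by
          rw [Rat.cast_def, hn, hm]
          congr 1
          exact_mod_cast (Int.toNat_of_nonneg hnum.le).symm
        rw [hcast, div_lt_div_iff₀ hd hmRpos] at hr1
        rw [hcast, div_lt_div_iff₀ hmRpos hΔ0] at hr2
        have hcond : (n:ℝ) * (e j0 - e i0) < m * (e j - e i) := by linarith
        have hconc := himp m n (by omega) hcond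
        have hlt2 : (m:ℝ) * (x i - x j) < n * (x i0 - x j0) := by
          rw [hβmul]; linarith
        linarith
    linarith
  intro i j
  rcases lt_trichotomy (e i) (e j) with h | h | h
  · exact step i j h
  · have h1 := eqcase i j h
    have h2 := eqcase j i h.symm
    rw [h]
    have : x i = x j := le_antisymm h2 h1
    rw [this]; ring
  · have := step j i h
    have h2 : x j - x i = β * (e i - e j) := this
    linarith [h2]


lemma conj_mul_conj {ι : Type*} [Fintype ι] [DecidableEq ι] (A X Y : Matrix ι ι ℂ) (h : star A * A = 1) :
    (A * X * star A) * (A * Y * star A) = A * (X * Y) * star A := by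
  have h1 : A * X * star A * (A * Y * star A) = A * X * ((star A * A) * (Y * star A)) := by
    noncomm_ring
  rw [h1, h, one_mul]
  noncomm_ring

lemma trace_equiv_conj {ι : Type*} [Fintype ι] [DecidableEq ι] (A X Y : Matrix ι ι ℂ)
    (h : star A * A = 1) :
    Matrix.trace ((A * X * star A) * (A * Y * star A)) = Matrix.trace (X * Y) := by
  rw [conj_mul_conj A X Y h]
  rw [Matrix.trace_mul_comm]
  rw [← mul_assoc, ← mul_assoc, h, one_mul]

lemma key_ineq {d n : ℕ} (H σ W : Matrix (Fin d) (Fin d) ℂ)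
    (hW : W ∈ Matrix.unitaryGroup (Fin d) ℂ) (e q : Fin d → ℝ)
    (hHW : H = W * Matrix.diagonal (fun i => (e i : ℂ)) * star W)
    (hσW : σ = W * Matrix.diagonal (fun i => (q i : ℂ)) * star W)
    (hp : IsPassive (sumHam n H) (tensPow n σ))
    (a b : Fin n → Fin d)
    (hab : ∑ m, e (a m) < ∑ m, e (b m)) :
    ∏ m, q (b m) ≤ ∏ m, q (a m) := by
  set A : Matrix (Fin n → Fin d) (Fin n → Fin d) ℂ := tensPow n W with hAdef
  have hWs : star W * W = 1 := Matrix.UnitaryGroup.star_mul_self ⟨W, hW⟩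
  have hWs' : W * star W = 1 := Matrix.mem_unitaryGroup_iff.mp hW
  have hA2 : star A * A = 1 := by
    rw [hAdef, ← tensPow_star, ← tensPow_mul, hWs, tensPow_one]
  have hA1 : A * star A = 1 := by
    rw [hAdef, ← tensPow_star, ← tensPow_mul, hWs', tensPow_one]
  have hAmem : A ∈ Matrix.unitaryGroup (Fin n → Fin d) ℂ :=
    Matrix.mem_unitaryGroup_iff.mpr hA1
  -- the swap permutation matrix
  set s : Equiv.Perm (Fin n → Fin d) := Equiv.swap a b with hsdef
  set T : Matrix (Fin n → Fin d) (Fin n → Fin d) ℂ := (1 : Matrix _ _ ℂ).submatrix s id with hTdef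
  have hstarT : star T = (1 : Matrix _ _ ℂ).submatrix id s := by
    show Tᴴ = _
    rw [hTdef, Matrix.conjTranspose_submatrix, Matrix.conjTranspose_one]
  have hT1 : T * star T = 1 := by
    rw [hstarT, hTdef]
    have h2 := Matrix.submatrix_mul_equiv (1 : Matrix (Fin n → Fin d) (Fin n → Fin d) ℂ)
      (1 : Matrix (Fin n → Fin d) (Fin n → Fin d) ℂ) ⇑s (Equiv.refl _) ⇑s
    simp only [Equiv.coe_refl] at h2
    rw [h2, one_mul, Matrix.submatrix_one_equiv]
  have hT2 : star T * T = 1 := by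
    rw [hstarT, hTdef]
    have h2 := Matrix.submatrix_mul_equiv (1 : Matrix (Fin n → Fin d) (Fin n → Fin d) ℂ)
      (1 : Matrix (Fin n → Fin d) (Fin n → Fin d) ℂ) id s id
    rw [h2, one_mul, Matrix.submatrix_id_id]
  have hTmem : T ∈ Matrix.unitaryGroup (Fin n → Fin d) ℂ :=
    Matrix.mem_unitaryGroup_iff.mpr hT1
  -- T conjugation of a diagonal matrix
  have hTdiag : ∀ g : (Fin n → Fin d) → ℂ,
      T * Matrix.diagonal g * star T = Matrix.diagonal (g ∘ s) := by
    intro g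
    have step1 : T * Matrix.diagonal g = (Matrix.diagonal g).submatrix ⇑s id := by
      rw [hTdef]
      have h2 := Matrix.submatrix_mul_equiv (1 : Matrix (Fin n → Fin d) (Fin n → Fin d) ℂ)
        (Matrix.diagonal g) ⇑s (Equiv.refl _) id
      simp only [Equiv.coe_refl, Matrix.submatrix_id_id] at h2
      rw [h2, one_mul]
    rw [step1, hstarT]
    have h3 := Matrix.submatrix_mul_equiv (Matrix.diagonal g)
      (1 : Matrix (Fin n → Fin d) (Fin n → Fin d) ℂ) ⇑s (Equiv.refl _) ⇑s
    simp only [Equiv.coe_refl] at h3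
    rw [h3, mul_one, Matrix.submatrix_diagonal_equiv]
  -- real product/sum functions
  set P : (Fin n → Fin d) → ℝ := fun c => ∏ m, q (c m) with hPdef
  set E : (Fin n → Fin d) → ℝ := fun c => ∑ m, e (c m) with hEdef
  -- diagonal forms
  have hσ' : tensPow n σ = A * Matrix.diagonal (fun c => ((P c : ℝ) : ℂ)) * star A := by
    rw [hσW, tensPow_mul, tensPow_mul, tensPow_star, tensPow_diagonal]
    congr 2
    ext c
    rw [hPdef]
    push_cast
    rfl
  have hH' : sumHam n H = A * Matrix.diagonal (fun c => ((E c : ℝ) : ℂ)) * star A := by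
    rw [hHW]
    rw [← sumHam_conj W (star W) _ hWs']
    rw [sumHam_diagonal, tensPow_star]
    congr 2
    ext c
    rw [hEdef]
    push_cast
    rfl
  -- energies
  have henergy : ∀ g : (Fin n → Fin d) → ℂ,
      energy (sumHam n H) (A * Matrix.diagonal g * star A)
        = (∑ c, g c * ((E c : ℝ) : ℂ)).re := by
    intro g
    rw [energy, hH', trace_equiv_conj A _ _ hA2, Matrix.diagonal_mul_diagonal,
      Matrix.trace_diagonal]
  -- the unitary
  set U : Matrix (Fin n → Fin d) (Fin n → Fin d) ℂ := A * T * star A with hUdef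
  have hUmem : U ∈ Matrix.unitaryGroup (Fin n → Fin d) ℂ :=
    mul_mem (mul_mem hAmem hTmem) (Unitary.star_mem hAmem)
  have hUstar : star U = A * star T * star A := by
    rw [hUdef, StarMul.star_mul, StarMul.star_mul, star_star, mul_assoc]
  have hconj : U * tensPow n σ * star U
      = A * Matrix.diagonal ((fun c => ((P c : ℝ) : ℂ)) ∘ s) * star A := by
    rw [hσ', hUdef, hUstar, ← hTdiag]
    rw [conj_mul_conj A T _ hA2, conj_mul_conj A _ (star T) hA2]
  -- apply passivity
  have hpass := hp U hUmem
  rw [hconj] at hpass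
  have hE1 : energy (sumHam n H) (tensPow n σ) = ∑ c, P c * E c := by
    rw [hσ', henergy]
    rw [Complex.re_sum]
    refine Finset.sum_congr rfl (fun c _ => ?_)
    rw [← Complex.ofReal_mul, Complex.ofReal_re]
  have hE2 : energy (sumHam n H)
      (A * Matrix.diagonal ((fun c => ((P c : ℝ) : ℂ)) ∘ s) * star A) = ∑ c, P (s c) * E c := by
    rw [henergy]
    rw [Complex.re_sum]
    refine Finset.sum_congr rfl (fun c _ => ?_)
    show (((P (s c) : ℝ) : ℂ) * ((E c : ℝ) : ℂ)).re = _
    rw [← Complex.ofReal_mul, Complex.ofReal_re]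
  rw [hE1, hE2] at hpass
  -- extract the two-point inequality
  have hne : a ≠ b := by
    intro h; rw [h] at hab; exact lt_irrefl _ hab
  have hdiff : ∑ c, P (s c) * E c - ∑ c, P c * E c
      = (P b - P a) * E a + (P a - P b) * E b := by
    rw [← Finset.sum_sub_distrib]
    have hzero : ∀ c ∈ Finset.univ, c ∉ ({a, b} : Finset (Fin n → Fin d)) →
        P (s c) * E c - P c * E c = 0 := by
      intro c _ hc
      simp only [Finset.mem_insert, Finset.mem_singleton, not_or] at hc
      rw [hsdef]
      rw [Equiv.swap_apply_of_ne_of_ne hc.1 hc.2]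
      ring
    rw [← Finset.sum_subset (Finset.subset_univ ({a, b} : Finset (Fin n → Fin d))) hzero]
    rw [Finset.sum_pair hne]
    rw [hsdef]
    simp only [Equiv.swap_apply_left, Equiv.swap_apply_right]
    ring
  have hfinal : 0 ≤ (P b - P a) * E a + (P a - P b) * E b := by linarith
  have : 0 ≤ (P a - P b) * (E b - E a) := by linarith [hfinal]
  have hEab : E a < E b := hab
  nlinarith [this, hEab]

lemma trace_submatrix_equiv' {ι κ : Type*} [Fintype ι] [Fintype κ] (g : κ ≃ ι)
    (M : Matrix ι ι ℂ) : (M.submatrix g g).trace = M.trace := by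
  unfold Matrix.trace Matrix.diag
  exact Equiv.sum_comp g (fun j => M j j)

lemma isPassive_one {d : ℕ} (H σ : Matrix (Fin d) (Fin d) ℂ)
    (h : IsPassive (sumHam 1 H) (tensPow 1 σ)) : IsPassive H σ := by
  set g : (Fin 1 → Fin d) ≃ Fin d := Equiv.funUnique (Fin 1) (Fin d) with hg
  have hsum : sumHam 1 H = H.submatrix g g := by
    ext i j
    simp [sumHam, Finset.univ_unique, hg]
  have htens : tensPow 1 σ = σ.submatrix g g := by
    ext i j
    simp [tensPow, Finset.univ_unique, hg]
  intro U hU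
  set U' : Matrix (Fin 1 → Fin d) (Fin 1 → Fin d) ℂ := U.submatrix g g with hU'
  have hstarU' : star U' = (star U).submatrix g g := by
    show (U.submatrix g g)ᴴ = _
    rw [Matrix.conjTranspose_submatrix]
    rfl
  have hU'mem : U' ∈ Matrix.unitaryGroup (Fin 1 → Fin d) ℂ := by
    rw [Matrix.mem_unitaryGroup_iff]
    rw [hU', hstarU', Matrix.submatrix_mul_equiv]
    rw [Matrix.mem_unitaryGroup_iff.mp hU]
    exact Matrix.submatrix_one_equiv g
  have key := h U' hU'mem
  have e1 : energy (sumHam 1 H) (tensPow 1 σ) = energy H σ := by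
    rw [hsum, htens, energy, energy, Matrix.submatrix_mul_equiv, trace_submatrix_equiv']
  have e2 : energy (sumHam 1 H) (U' * tensPow 1 σ * star U')
      = energy H (U * σ * star U) := by
    rw [hsum, htens, hU', hstarU', energy, energy,
      Matrix.submatrix_mul_equiv, Matrix.submatrix_mul_equiv, Matrix.submatrix_mul_equiv,
      trace_submatrix_equiv']
  rw [e1, e2] at key
  exact key

theorem completely_passive_is_gibbs {d : ℕ} (H σ : Matrix (Fin d) (Fin d) ℂ)
    (hH : H.IsHermitian) (hns : ∀ c : ℂ, H ≠ c • 1)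
    (hσ : σ.PosDef) (htr : σ.trace = 1)
    (hcp : ∀ n : ℕ, 1 ≤ n → IsPassive (sumHam n H) (tensPow n σ)) :
    ∃ β : ℝ, 0 ≤ β ∧ σ = gibbs H β := by
  -- d is positive
  rcases Nat.eq_zero_or_pos d with hd0 | hdpos
  · subst hd0
    exfalso
    have : Matrix.trace σ = 0 := by
      unfold Matrix.trace
      exact Finset.sum_of_isEmpty _
    rw [htr] at this
    exact one_ne_zero this
  -- basic commutation
  have hpass1 : IsPassive H σ := isPassive_one H σ (hcp 1 le_rfl)
  have hσherm : σ.IsHermitian := hσ.1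
  have hcomm : σ * H = H * σ := passive_commute hH hσherm hpass1
  -- spectral decomposition of H
  set U : Matrix (Fin d) (Fin d) ℂ := (hH.eigenvectorUnitary : Matrix (Fin d) (Fin d) ℂ) with hUdef
  have hUmem : U ∈ Matrix.unitaryGroup (Fin d) ℂ := (hH.eigenvectorUnitary).2
  have hU1 : star U * U = 1 := Matrix.UnitaryGroup.star_mul_self ⟨U, hUmem⟩
  have hU2 : U * star U = 1 := Matrix.mem_unitaryGroup_iff.mp hUmem
  set e : Fin d → ℝ := hH.eigenvalues with hedef
  set D : Matrix (Fin d) (Fin d) ℂ := Matrix.diagonal (fun i => (e i : ℂ)) with hDdef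
  have hHspec : H = U * D * star U := by
    have := hH.spectral_theorem
    rw [Unitary.conjStarAlgAut_apply] at this
    exact this
  have hDspec : star U * H * U = D := by
    rw [hHspec]
    calc star U * (U * D * star U) * U = (star U * U) * D * (star U * U) := by noncomm_ring
      _ = D := by rw [hU1, one_mul, mul_one]
  -- conjugated state
  set τ : Matrix (Fin d) (Fin d) ℂ := star U * σ * U with hτdef
  have hτherm : τ.IsHermitian := by
    show τᴴ = τ
    show star τ = τ
    have hσs : star σ = σ := hσherm
    rw [hτdef, StarMul.star_mul, StarMul.star_mul, star_star, hσs]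
    noncomm_ring
  have hτD : τ * D = D * τ := by
    rw [← hDspec, hτdef]
    calc (star U * σ * U) * (star U * H * U) = star U * (σ * (U * star U) * H) * U := by noncomm_ring
      _ = star U * (σ * H) * U := by rw [hU2, mul_one]
      _ = star U * (H * σ) * U := by rw [hcomm]
      _ = star U * (H * (U * star U) * σ) * U := by rw [hU2, mul_one]
      _ = (star U * H * U) * (star U * σ * U) := by noncomm_ring
  have hτblock : ∀ i j, e i ≠ e j → τ i j = 0 := by
    intro i j hij
    have h1 : (τ * D) i j = τ i j * (e j : ℂ) := Matrix.mul_diagonal _ _ _ _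
    have h2 : (D * τ) i j = (e i : ℂ) * τ i j := Matrix.diagonal_mul _ _ _ _
    have h3 : τ i j * (e j : ℂ) = (e i : ℂ) * τ i j := by rw [← h1, ← h2, hτD]
    have h4 : τ i j * ((e j : ℂ) - (e i : ℂ)) = 0 := by ring_nf; linear_combination h3
    rcases mul_eq_zero.mp h4 with h | h
    · exact h
    · exfalso
      apply hij
      have : (e j : ℂ) = (e i : ℂ) := by linear_combination h
      exact_mod_cast this.symm
  -- simultaneous diagonalization
  obtain ⟨V, hVmem, hEV, q, hdiagq⟩ := block_diagonalize e τ hτherm hτblock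
  have hV1 : star V * V = 1 := Matrix.UnitaryGroup.star_mul_self ⟨V, hVmem⟩
  have hV2 : V * star V = 1 := Matrix.mem_unitaryGroup_iff.mp hVmem
  set Wm : Matrix (Fin d) (Fin d) ℂ := U * V with hWmdef
  have hWmem : Wm ∈ Matrix.unitaryGroup (Fin d) ℂ := mul_mem hUmem hVmem
  have hWstar : star Wm = star V * star U := by
    rw [hWmdef, StarMul.star_mul]
  have hW1 : star Wm * Wm = 1 := Matrix.UnitaryGroup.star_mul_self ⟨Wm, hWmem⟩
  have hW2 : Wm * star Wm = 1 := Matrix.mem_unitaryGroup_iff.mp hWmem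
  have hHW : H = Wm * D * star Wm := by
    rw [hWmdef, hWstar]
    have hVDV : V * D * star V = D := by
      rw [← hEV]
      rw [mul_assoc, hV2, mul_one]
    calc H = U * D * star U := hHspec
      _ = U * (V * D * star V) * star U := by rw [hVDV]
      _ = U * V * D * (star V * star U) := by noncomm_ring
  have hσW : σ = Wm * Matrix.diagonal (fun i => (q i : ℂ)) * star Wm := by
    have hτeq : τ = V * Matrix.diagonal (fun i => (q i : ℂ)) * star V := by
      calc τ = (V * star V) * τ * (V * star V) := by rw [hV2, one_mul, mul_one]
        _ = V * (star V * τ * V) * star V := by noncomm_ring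
        _ = V * Matrix.diagonal (fun i => (q i : ℂ)) * star V := by rw [hdiagq]
    have hστ : σ = U * τ * star U := by
      rw [hτdef]
      calc σ = (U * star U) * σ * (U * star U) := by rw [hU2, one_mul, mul_one]
        _ = U * (star U * σ * U) * star U := by noncomm_ring
    rw [hστ, hτeq, hWmdef, hWstar]
    noncomm_ring
  -- the diagonal matrix of q
  have hdq : star Wm * σ * Wm = Matrix.diagonal (fun i => (q i : ℂ)) := by
    rw [hσW]
    calc star Wm * (Wm * Matrix.diagonal (fun i => (q i : ℂ)) * star Wm) * Wm
        = (star Wm * Wm) * Matrix.diagonal (fun i => (q i : ℂ)) * (star Wm * Wm) := by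
          noncomm_ring
      _ = Matrix.diagonal (fun i => (q i : ℂ)) := by rw [hW1, one_mul, mul_one]
  -- positivity of q
  have hqpos : ∀ i, 0 < q i := by
    intro i
    have hform : (star Wm * σ * Wm) i i
        = dotProduct (star (fun k => Wm k i)) (σ *ᵥ (fun k => Wm k i)) := by
      rw [Matrix.mul_apply]
      simp only [Matrix.mul_apply, dotProduct, Matrix.mulVec, Pi.star_apply,
        Matrix.star_apply, Finset.sum_mul, Finset.mul_sum]
      rw [Finset.sum_comm]
      exact Finset.sum_congr rfl (fun k _ => Finset.sum_congr rfl (fun l _ => by ring))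
    have hx : (fun k => Wm k i) ≠ 0 := by
      intro hx0
      have h1 : (star Wm * Wm) i i = 0 := by
        rw [Matrix.mul_apply]
        apply Finset.sum_eq_zero
        intro k _
        have hk : Wm k i = 0 := congrFun hx0 k
        rw [hk, mul_zero]
      rw [hW1] at h1
      simp at h1
    have h2 := hσ.dotProduct_mulVec_pos hx
    have h3 : ((q i : ℝ) : ℂ) = (star Wm * σ * Wm) i i := by
      rw [hdq, Matrix.diagonal_apply_eq]
    rw [hform] at h3
    have h4 : (0 : ℂ) < ((q i : ℝ) : ℂ) := by rw [h3]; exact h2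
    exact_mod_cast h4
  -- sum of q is 1
  have hqsum : ∑ i, q i = 1 := by
    have h1 : Matrix.trace (Matrix.diagonal (fun i => (q i : ℂ))) = 1 := by
      rw [← hdq]
      calc Matrix.trace (star Wm * σ * Wm)
          = Matrix.trace (Wm * (star Wm * σ)) := Matrix.trace_mul_comm _ _
        _ = Matrix.trace σ := by rw [← mul_assoc, hW2, one_mul]
        _ = 1 := htr
    rw [Matrix.trace_diagonal] at h1
    have h2 : ((∑ i, q i : ℝ) : ℂ) = 1 := by
      push_cast
      exact h1
    exact_mod_cast h2
  -- nonconstancy of e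
  have hnc : ∃ i j, e i < e j := by
    by_contra hno
    push_neg at hno
    have hconst : ∀ i j, e i = e j := fun i j => le_antisymm (hno j i) (hno i j)
    set i1 : Fin d := ⟨0, hdpos⟩ with hi1
    apply hns ((e i1 : ℂ))
    have hDc : D = (e i1 : ℂ) • 1 := by
      rw [hDdef]
      ext i j
      by_cases h : i = j
      · subst h
        rw [Matrix.diagonal_apply_eq, Matrix.smul_apply, Matrix.one_apply_eq, smul_eq_mul,
          mul_one, hconst i i1]
      · rw [Matrix.diagonal_apply_ne _ h, Matrix.smul_apply, Matrix.one_apply_ne h,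
          smul_eq_mul, mul_zero]
    rw [hHW, hDc]
    calc Wm * ((e i1 : ℂ) • 1) * star Wm = (e i1 : ℂ) • (Wm * 1 * star Wm) := by
          rw [Matrix.mul_smul, Matrix.smul_mul]
      _ = (e i1 : ℂ) • 1 := by rw [mul_one, hW2]
  obtain ⟨i0, j0, hij0⟩ := hnc
  -- the combinatorial inequality, in Lenard form
  have K2 : ∀ (m n : ℕ) (i j k l : Fin d), 1 ≤ m + n →
      (m : ℝ) * e i + n * e k < (m : ℝ) * e j + n * e l →
      (m : ℝ) * Real.log (q j) + n * Real.log (q l)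
        ≤ (m : ℝ) * Real.log (q i) + n * Real.log (q k) := by
    intro m n i j k l hmn hlt
    set a : Fin (m + n) → Fin d := Fin.addCases (fun _ => i) (fun _ => k) with ha
    set b : Fin (m + n) → Fin d := Fin.addCases (fun _ => j) (fun _ => l) with hb
    have hsum : ∀ (u v : Fin d), (∑ w, e ((Fin.addCases (fun _ => u) (fun _ => v) : Fin (m+n) → Fin d) w))
        = m * e u + n * e v := by
      intro u v
      rw [Fin.sum_univ_add]
      simp only [Fin.addCases_left, Fin.addCases_right]
      rw [Finset.sum_const, Finset.sum_const]
      simp [nsmul_eq_mul]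
    have hprod : ∀ (u v : Fin d), (∏ w, q ((Fin.addCases (fun _ => u) (fun _ => v) : Fin (m+n) → Fin d) w))
        = q u ^ m * q v ^ n := by
      intro u v
      rw [Fin.prod_univ_add]
      simp only [Fin.addCases_left, Fin.addCases_right]
      rw [Finset.prod_const, Finset.prod_const]
      simp
    have hHW' : H = Wm * Matrix.diagonal (fun i => (e i : ℂ)) * star Wm := hHW
    have hineq := key_ineq H σ Wm hWmem e q hHW' hσW (hcp (m + n) hmn) a b (by
      rw [ha, hb, hsum, hsum]
      exact hlt)
    rw [ha, hb, hprod, hprod] at hineq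
    have hpj : (0:ℝ) < q j ^ m * q l ^ n := mul_pos (pow_pos (hqpos j) m) (pow_pos (hqpos l) n)
    have h1 : Real.log (q j ^ m * q l ^ n) ≤ Real.log (q i ^ m * q k ^ n) :=
      Real.log_le_log hpj hineq
    rw [Real.log_mul (pow_pos (hqpos j) m).ne' (pow_pos (hqpos l) n).ne',
      Real.log_mul (pow_pos (hqpos i) m).ne' (pow_pos (hqpos k) n).ne',
      Real.log_pow, Real.log_pow, Real.log_pow, Real.log_pow] at h1
    push_cast at h1
    linarith
  obtain ⟨β, hβ, hlog⟩ := lenard e (fun i => Real.log (q i)) i0 j0 hij0 K2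
  -- identify q with the Gibbs weights
  set Z : ℝ := ∑ i, Real.exp (-β * e i) with hZdef
  have hZpos : 0 < Z := by
    apply Finset.sum_pos (fun i _ => Real.exp_pos _)
    exact ⟨i0, Finset.mem_univ i0⟩
  have hqC : ∀ i, q i = Real.exp (Real.log (q i0) + β * e i0) * Real.exp (-β * e i) := by
    intro i
    have h1 := hlog i i0
    have h2 : β * (e i0 - e i) = β * e i0 - β * e i := by ring
    have h3 : Real.log (q i) = (Real.log (q i0) + β * e i0) + (-β * e i) := by
      rw [h2] at h1; linarith
    calc q i = Real.exp (Real.log (q i)) := (Real.exp_log (hqpos i)).symm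
      _ = Real.exp (Real.log (q i0) + β * e i0) * Real.exp (-β * e i) := by
          rw [h3, Real.exp_add]
  have hCZ : Real.exp (Real.log (q i0) + β * e i0) * Z = 1 := by
    rw [hZdef, Finset.mul_sum]
    rw [← hqsum]
    exact Finset.sum_congr rfl (fun i _ => (hqC i).symm)
  have hqform : ∀ i, q i = Real.exp (-β * e i) / Z := by
    intro i
    rw [hqC i]
    have hC : Real.exp (Real.log (q i0) + β * e i0) = 1 / Z := by
      field_simp at hCZ ⊢
      linarith [hCZ]
    rw [hC]
    ring
  -- final assembly
  refine ⟨β, hβ, ?_⟩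
  have hUnit : IsUnit Wm := ⟨⟨Wm, star Wm, hW2, hW1⟩, rfl⟩
  have hinv : Wm⁻¹ = star Wm := Matrix.inv_eq_left_inv hW1
  have hsmul : ((-β : ℂ)) • H = Wm * ((-β : ℂ) • D) * star Wm := by
    rw [hHW, Matrix.mul_smul, Matrix.smul_mul]
  have hexpD : NormedSpace.exp ((-β : ℂ) • D)
      = Matrix.diagonal (fun i => (Real.exp (-β * e i) : ℂ)) := by
    rw [hDdef, ← Matrix.diagonal_smul, Matrix.exp_diagonal]
    have hfun : NormedSpace.exp ((-β : ℂ) • fun i => ((e i : ℝ) : ℂ))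
        = fun i => ((Real.exp (-β * e i) : ℝ) : ℂ) := by
      rw [Pi.exp_def]
      funext i
      show NormedSpace.exp ((-β : ℂ) • ((e i : ℝ) : ℂ)) = ((Real.exp (-β * e i) : ℝ) : ℂ)
      rw [← Complex.exp_eq_exp_ℂ, smul_eq_mul, Complex.ofReal_exp]
      push_cast
      ring_nf
    rw [hfun]
  have hexp : NormedSpace.exp ((-β : ℂ) • H)
      = Wm * Matrix.diagonal (fun i => (Real.exp (-β * e i) : ℂ)) * star Wm := by
    rw [hsmul, ← hinv, Matrix.exp_conj Wm _ hUnit, hexpD]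
  have htrexp : Matrix.trace (NormedSpace.exp ((-β : ℂ) • H)) = (Z : ℂ) := by
    rw [hexp]
    have h1 : Matrix.trace (Wm * Matrix.diagonal (fun i => (Real.exp (-β * e i) : ℂ)) * star Wm)
        = Matrix.trace (Matrix.diagonal (fun i => (Real.exp (-β * e i) : ℂ))) := by
      calc Matrix.trace (Wm * Matrix.diagonal (fun i => (Real.exp (-β * e i) : ℂ)) * star Wm)
          = Matrix.trace (star Wm * (Wm * Matrix.diagonal (fun i => (Real.exp (-β * e i) : ℂ)))) :=
            Matrix.trace_mul_comm _ _
        _ = _ := by rw [← mul_assoc, hW1, one_mul]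
    rw [h1, Matrix.trace_diagonal, hZdef]
    push_cast
    rfl
  rw [gibbs, htrexp, hexp, hσW]
  have hZC : ((Z : ℝ) : ℂ) ≠ 0 := by
    exact_mod_cast hZpos.ne'
  calc Wm * Matrix.diagonal (fun i => (q i : ℂ)) * star Wm
      = Wm * ((Z : ℂ)⁻¹ • Matrix.diagonal (fun i => (Real.exp (-β * e i) : ℂ))) * star Wm := by
        have hfn : (fun i => ((q i : ℝ) : ℂ))
            = (Z : ℂ)⁻¹ • fun i => ((Real.exp (-β * e i) : ℝ) : ℂ) := by
          funext i
          show ((q i : ℝ) : ℂ) = (Z : ℂ)⁻¹ • ((Real.exp (-β * e i) : ℝ) : ℂ)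
          rw [hqform i, smul_eq_mul]
          push_cast
          field_simp
        rw [← Matrix.diagonal_smul, ← hfn]
    _ = (Z : ℂ)⁻¹ • (Wm * Matrix.diagonal (fun i => (Real.exp (-β * e i) : ℂ)) * star Wm) := by
        rw [Matrix.mul_smul, Matrix.smul_mul]
end
end

section
/- The tensor product of two passive states need not be passive: there exist a Hamiltonian H on ℂ^3 with simple eigenvalues and a passive state σ on ℂ^3 such that σ⊗σ is not passive with respect to H⊗1 + 1⊗H. -/
open Matrix BigOperators
open scoped Classical ComplexOrder

noncomputable section

/-! ### Auxiliary lemmas -/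

lemma energy_diag' {ι : Type*} [Fintype ι] [DecidableEq ι] (E p : ι → ℝ) :
    energy (Matrix.diagonal (fun i => (E i : ℂ))) (Matrix.diagonal (fun i => (p i : ℂ)))
      = ∑ i, p i * E i := by
  simp [energy, Matrix.trace, Matrix.diagonal_mul_diagonal, Matrix.diag]

lemma energy_conj' {ι : Type*} [Fintype ι] [DecidableEq ι] (E p : ι → ℝ) (U : Matrix ι ι ℂ) :
    energy (Matrix.diagonal (fun i => (E i : ℂ))) (U * Matrix.diagonal (fun i => (p i : ℂ)) * star U)
      = ∑ i, ∑ j, E i * p j * Complex.normSq (U i j) := by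
  have h : ∀ i, (U * Matrix.diagonal (fun i => (p i : ℂ)) * star U * Matrix.diagonal (fun i => (E i : ℂ))) i i
      = ∑ j, ((E i * p j * Complex.normSq (U i j) : ℝ) : ℂ) := by
    intro i
    rw [Matrix.mul_diagonal, Matrix.mul_apply]
    rw [Finset.sum_mul]
    congr 1; funext j
    rw [Matrix.mul_diagonal, Matrix.star_apply]
    rw [show U i j * (p j : ℂ) * star (U i j) * (E i : ℂ)
        = (E i : ℂ) * (p j : ℂ) * (U i j * star (U i j)) by ring]
    rw [Complex.star_def, Complex.mul_conj]
    push_cast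
    ring
  simp only [energy, Matrix.trace, Matrix.diag, h]
  norm_cast

lemma row_sum' {ι : Type*} [Fintype ι] [DecidableEq ι] {U : Matrix ι ι ℂ}
    (hU : U ∈ Matrix.unitaryGroup ι ℂ) (i : ι) : ∑ j, Complex.normSq (U i j) = 1 := by
  have h1 : U * star U = 1 := (Matrix.mem_unitaryGroup_iff).mp hU
  have := congrFun (congrFun h1 i) i
  rw [Matrix.mul_apply] at this
  simp only [Matrix.star_apply, Complex.star_def, Complex.mul_conj] at this
  rw [Matrix.one_apply_eq] at this
  have := congrArg Complex.re this
  simpa using this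

lemma col_sum' {ι : Type*} [Fintype ι] [DecidableEq ι] {U : Matrix ι ι ℂ}
    (hU : U ∈ Matrix.unitaryGroup ι ℂ) (j : ι) : ∑ i, Complex.normSq (U i j) = 1 := by
  have h1 : star U * U = 1 := (Matrix.mem_unitaryGroup_iff').mp hU
  have := congrFun (congrFun h1 j) j
  rw [Matrix.mul_apply] at this
  simp only [Matrix.star_apply, Complex.star_def] at this
  rw [Matrix.one_apply_eq] at this
  have := congrArg Complex.re this
  rw [← Complex.one_re, ← this]
  rw [Complex.re_sum]
  apply Finset.sum_congr rfl
  intro i _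
  rw [mul_comm, Complex.mul_conj]
  simp

def permU {ι : Type*} [Fintype ι] [DecidableEq ι] (e : Equiv.Perm ι) : Matrix ι ι ℂ :=
  Matrix.of fun i j => if i = e j then 1 else 0

lemma permU_mem {ι : Type*} [Fintype ι] [DecidableEq ι] (e : Equiv.Perm ι) :
    permU e ∈ Matrix.unitaryGroup ι ℂ := by
  rw [Matrix.mem_unitaryGroup_iff]
  ext i j
  rw [Matrix.mul_apply]
  have h : ∀ k, permU e i k * star (permU e) k j
      = if k = e.symm i then (if i = j then (1:ℂ) else 0) else 0 := by
    intro k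
    simp only [permU, Matrix.star_apply, Matrix.of_apply, Complex.star_def]
    by_cases hk : k = e.symm i
    · subst hk
      simp only [Equiv.apply_symm_apply, if_pos rfl]
      by_cases hij : i = j
      · subst hij; simp
      · have : ¬ (j = e (e.symm i)) := by rw [Equiv.apply_symm_apply]; exact fun h => hij h.symm
        simp [this, hij, Ne.symm hij]
    · have : ¬ (i = e k) := fun h => hk (by rw [h, Equiv.symm_apply_apply])
      simp [this, hk]
  simp only [h]
  rw [Finset.sum_ite_eq' Finset.univ (e.symm i)]
  simp [Matrix.one_apply]

lemma normSq_permU {ι : Type*} [Fintype ι] [DecidableEq ι] (e : Equiv.Perm ι) (i j : ι) :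
    Complex.normSq (permU e i j) = if i = e j then 1 else 0 := by
  simp only [permU, Matrix.of_apply]
  split <;> simp

lemma tensPow_diag' {d : ℕ} (p : Fin d → ℂ) :
    tensPow 2 (Matrix.diagonal p) = Matrix.diagonal (fun i => p (i 0) * p (i 1)) := by
  ext i j
  rcases eq_or_ne i j with h | h
  · subst h
    simp [tensPow, Fin.prod_univ_two, Matrix.diagonal_apply_eq]
  · rw [Matrix.diagonal_apply_ne _ h]
    obtain ⟨m, hm⟩ := Function.ne_iff.mp h
    simp only [tensPow, Matrix.of_apply]
    apply Finset.prod_eq_zero (Finset.mem_univ m)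
    exact Matrix.diagonal_apply_ne _ hm

lemma sumHam_diag' {d : ℕ} (E : Fin d → ℂ) :
    sumHam 2 (Matrix.diagonal E) = Matrix.diagonal (fun i => E (i 0) + E (i 1)) := by
  have he0 : Finset.univ.erase (0 : Fin 2) = {1} := by decide
  have he1 : Finset.univ.erase (1 : Fin 2) = {0} := by decide
  ext i j
  simp only [sumHam, Matrix.of_apply, Fin.sum_univ_two, he0, he1, Finset.prod_singleton]
  rcases eq_or_ne i j with h | h
  · subst h
    simp [Matrix.diagonal_apply_eq]
  · rw [Matrix.diagonal_apply_ne _ h]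
    obtain ⟨m, hm⟩ := Function.ne_iff.mp h
    obtain rfl | rfl : m = 0 ∨ m = 1 := by omega
    · rw [Matrix.diagonal_apply_ne _ hm, if_neg hm]
      ring
    · rw [Matrix.diagonal_apply_ne _ hm, if_neg hm]
      ring

lemma trace_pows' {n : Type*} [Fintype n] [DecidableEq n] {H : Matrix n n ℂ}
    (hH : H.IsHermitian) :
    H.trace = ∑ i, (hH.eigenvalues i : ℂ) ∧
    (H * H).trace = ∑ i, (hH.eigenvalues i : ℂ)^2 ∧
    (H * H * H).trace = ∑ i, (hH.eigenvalues i : ℂ)^3 := by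
  set V : Matrix n n ℂ := (hH.eigenvectorUnitary : Matrix n n ℂ) with hV
  set D : Matrix n n ℂ := Matrix.diagonal (RCLike.ofReal ∘ hH.eigenvalues) with hD
  have hsp : H = V * D * star V := hH.spectral_theorem
  have hVV : star V * V = 1 := Matrix.mem_unitaryGroup_iff'.mp hH.eigenvectorUnitary.2
  have key : ∀ k : ℕ, (H^(k+1)).trace = ∑ i, (hH.eigenvalues i : ℂ)^(k+1) := by
    intro k
    have hpow : H^(k+1) = V * D^(k+1) * star V := by
      induction k with
      | zero => simpa using hsp
      | succ k ih =>
        rw [pow_succ H (k+1), ih, pow_succ D (k+1), hsp]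
        rw [show V * D ^ (k + 1) * star V * (V * D * star V)
          = V * D ^ (k+1) * (star V * V) * D * star V by noncomm_ring]
        rw [hVV]
        noncomm_ring
    rw [hpow, Matrix.trace_mul_comm, ← Matrix.mul_assoc, hVV, Matrix.one_mul]
    rw [hD, Matrix.diagonal_pow, Matrix.trace_diagonal]
    simp
  refine ⟨?_, ?_, ?_⟩
  · simpa using key 0
  · have := key 1; rwa [pow_two] at this
  · have := key 2; rwa [pow_succ, pow_two] at this

lemma distinct_aux (x y z : ℝ) (h1 : x+y+z = 5) (h2 : x^2+y^2+z^2 = 13)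
    (h3 : x^3+y^3+z^3 = 35) : x ≠ y := by
  intro h
  subst h
  have hz : z = 5 - 2*x := by linarith
  subst hz
  have hx : x = 15/7 := by linear_combination ((10 - (3/2)*x)*h2 - (3/2)*h3)/7
  rw [hx] at h2
  norm_num at h2

theorem product_of_passive_not_passive :
    ∃ (H σ : Matrix (Fin 3) (Fin 3) ℂ) (hH : H.IsHermitian),
      Function.Injective hH.eigenvalues ∧ IsDensity σ ∧ IsPassive H σ ∧
        ¬ IsPassive (sumHam 2 H) (tensPow 2 σ) := by
  set Er : Fin 3 → ℝ := ![0, 2, 3] with hEr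
  set pr : Fin 3 → ℝ := ![2/5, 7/20, 1/4] with hpr
  set H : Matrix (Fin 3) (Fin 3) ℂ := Matrix.diagonal (fun i => (Er i : ℂ)) with hHdef
  set σ : Matrix (Fin 3) (Fin 3) ℂ := Matrix.diagonal (fun i => (pr i : ℂ)) with hσdef
  have hH : H.IsHermitian := by
    apply Matrix.isHermitian_diagonal_of_self_adjoint
    funext i
    exact Complex.conj_ofReal _
  refine ⟨H, σ, hH, ?_, ?_, ?_, ?_⟩
  · -- injectivity of eigenvalues
    obtain ⟨t1, t2, t3⟩ := trace_pows' hH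
    have tr1 : H.trace = ((5:ℝ):ℂ) := by
      rw [hHdef, Matrix.trace_diagonal, Fin.sum_univ_three]
      norm_num [hEr, Matrix.cons_val_two, Matrix.tail_cons, Matrix.head_cons]
    have tr2 : (H * H).trace = ((13:ℝ):ℂ) := by
      rw [hHdef, Matrix.diagonal_mul_diagonal, Matrix.trace_diagonal, Fin.sum_univ_three]
      norm_num [hEr, Matrix.cons_val_two, Matrix.tail_cons, Matrix.head_cons]
    have tr3 : (H * H * H).trace = ((35:ℝ):ℂ) := by
      rw [hHdef, Matrix.diagonal_mul_diagonal, Matrix.diagonal_mul_diagonal,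
        Matrix.trace_diagonal, Fin.sum_univ_three]
      norm_num [hEr, Matrix.cons_val_two, Matrix.tail_cons, Matrix.head_cons]
    set l := hH.eigenvalues with hl
    have r1 : l 0 + l 1 + l 2 = 5 := by
      have : ((l 0 + l 1 + l 2 : ℝ) : ℂ) = ((5:ℝ):ℂ) := by
        push_cast
        rw [← Fin.sum_univ_three (fun i => (l i : ℂ)), ← t1, tr1]
        norm_num
      exact_mod_cast this
    have r2 : (l 0)^2 + (l 1)^2 + (l 2)^2 = 13 := by
      have : (((l 0)^2 + (l 1)^2 + (l 2)^2 : ℝ) : ℂ) = ((13:ℝ):ℂ) := by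
        push_cast
        rw [← Fin.sum_univ_three (fun i => (l i : ℂ)^2), ← t2, tr2]
        norm_num
      exact_mod_cast this
    have r3 : (l 0)^3 + (l 1)^3 + (l 2)^3 = 35 := by
      have : (((l 0)^3 + (l 1)^3 + (l 2)^3 : ℝ) : ℂ) = ((35:ℝ):ℂ) := by
        push_cast
        rw [← Fin.sum_univ_three (fun i => (l i : ℂ)^3), ← t3, tr3]
        norm_num
      exact_mod_cast this
    have d01 : l 0 ≠ l 1 := distinct_aux _ _ _ r1 r2 r3
    have d02 : l 0 ≠ l 2 := distinct_aux (l 0) (l 2) (l 1) (by linarith) (by linarith) (by linarith)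
    have d12 : l 1 ≠ l 2 := distinct_aux (l 1) (l 2) (l 0) (by linarith) (by linarith) (by linarith)
    intro i j h
    fin_cases i <;> fin_cases j <;>
      first
        | rfl
        | exact absurd h d01
        | exact absurd h d02
        | exact absurd h d12
        | exact absurd h.symm d01
        | exact absurd h.symm d02
        | exact absurd h.symm d12
  · -- density
    constructor
    · rw [hσdef]
      refine Matrix.posSemidef_diagonal_iff.mpr fun i => ?_
      rw [Complex.zero_le_real]
      fin_cases i <;> norm_num [hpr]
    · rw [hσdef, Matrix.trace_diagonal, Fin.sum_univ_three]
      norm_num [hpr, Matrix.cons_val_two, Matrix.tail_cons, Matrix.head_cons]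
  · -- passivity
    intro U hU
    rw [hHdef, hσdef, energy_diag', energy_conj']
    have hr0 := row_sum' hU 0
    have hr1 := row_sum' hU 1
    have hr2 := row_sum' hU 2
    have hc0 := col_sum' hU 0
    have hc1 := col_sum' hU 1
    have hc2 := col_sum' hU 2
    rw [Fin.sum_univ_three] at hr0 hr1 hr2 hc0 hc1 hc2
    rw [Fin.sum_univ_three]
    simp only [Fin.sum_univ_three]
    norm_num [hEr, hpr, Matrix.cons_val_two, Matrix.tail_cons, Matrix.head_cons]
    linarith [Complex.normSq_nonneg (U 0 0), Complex.normSq_nonneg (U 0 1),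
      Complex.normSq_nonneg (U 0 2), Complex.normSq_nonneg (U 1 0),
      Complex.normSq_nonneg (U 1 1), Complex.normSq_nonneg (U 1 2),
      Complex.normSq_nonneg (U 2 0), Complex.normSq_nonneg (U 2 1),
      Complex.normSq_nonneg (U 2 2)]
  · -- non-passivity
    intro hpass
    set v : Fin 2 → Fin 3 := ![1, 1] with hv
    set w : Fin 2 → Fin 3 := ![0, 2] with hw
    set e : Equiv.Perm (Fin 2 → Fin 3) := Equiv.swap v w with he
    set E2 : (Fin 2 → Fin 3) → ℝ := fun i => Er (i 0) + Er (i 1) with hE2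
    set P2 : (Fin 2 → Fin 3) → ℝ := fun i => pr (i 0) * pr (i 1) with hP2
    have hK : sumHam 2 H = Matrix.diagonal (fun i => (E2 i : ℂ)) := by
      have harg : (fun i : Fin 2 → Fin 3 => ((Er (i 0) : ℂ)) + (Er (i 1) : ℂ))
          = fun i => ((E2 i : ℝ) : ℂ) := by
        funext i
        simp only [hE2]
        push_cast
        ring
      rw [hHdef, sumHam_diag', harg]
    have hτ : tensPow 2 σ = Matrix.diagonal (fun i => (P2 i : ℂ)) := by
      have harg : (fun i : Fin 2 → Fin 3 => ((pr (i 0) : ℂ)) * (pr (i 1) : ℂ))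
          = fun i => ((P2 i : ℝ) : ℂ) := by
        funext i
        simp only [hP2]
        push_cast
        ring
      rw [hσdef, tensPow_diag', harg]
    have hle := hpass (permU e) (permU_mem e)
    rw [hK, hτ, energy_diag', energy_conj'] at hle
    have hrhs : ∑ i, ∑ j, E2 i * P2 j * Complex.normSq (permU e i j)
        = ∑ j, E2 (e j) * P2 j := by
      rw [Finset.sum_comm]
      apply Finset.sum_congr rfl
      intro j _
      rw [Finset.sum_eq_single (e j)]
      · rw [normSq_permU, if_pos rfl, mul_one]
      · intro b _ hb
        rw [normSq_permU, if_neg (fun hbe => hb hbe), mul_zero]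
      · intro hj
        exact absurd (Finset.mem_univ _) hj
    rw [hrhs] at hle
    -- now expand both sums over Fin 2 → Fin 3
    have hev : e v = w := Equiv.swap_apply_left _ _
    have hew : e w = v := Equiv.swap_apply_right _ _
    have hid : ∀ x : Fin 2 → Fin 3, x ≠ v → x ≠ w → e x = x :=
      fun x hx hy => Equiv.swap_apply_of_ne_of_ne hx hy
    have expand : ∀ f : (Fin 2 → Fin 3) → ℝ,
        ∑ i, f i = ∑ a : Fin 3, ∑ b : Fin 3, f ![a, b] := by
      intro f
      rw [← Equiv.sum_comp (finTwoArrowEquiv (Fin 3)).symm f]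
      rw [Fintype.sum_prod_type]
      simp [finTwoArrowEquiv]
    rw [expand, expand] at hle
    simp only [Fin.sum_univ_three] at hle
    rw [hid ![0,0] (by decide) (by decide), hid ![0,1] (by decide) (by decide),
        show e ![0,2] = v from hew, hid ![1,0] (by decide) (by decide),
        show e ![1,1] = w from hev, hid ![1,2] (by decide) (by decide),
        hid ![2,0] (by decide) (by decide), hid ![2,1] (by decide) (by decide),
        hid ![2,2] (by decide) (by decide)] at hle
    simp only [hE2, hP2, hv, hw, hEr, hpr] at hle
    norm_num [Matrix.cons_val_zero, Matrix.cons_val_one, Matrix.head_cons, Matrix.cons_val_two, Matrix.tail_cons] at hle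
end
end
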